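/- Let G = (V,E) be a finite undirected multigraph and A, B ⊆ V². If two fourientations φ and φ' of G are cycle (resp. cocycle, cycle-cocycle) equivalent, then φ can be obtained from φ' by repeatedly reversing directed cycles (resp. directed (A,B)-cocycles, directed cycles or (A,B)-cocycles) none of which contains any 1-way edge that has the same orientation in φ and in φ'. -/

import Mathlib

namespace SubgraphsVsOrientations

/-- The four possible configurations of an edge in a fourientation:
`zero` = 0-way, `forward`/`backward` = the two 1-way configurations (relative to
a reference direction of the edge), `two` = 2-way. -/
inductive Four : Type
  | zero | forward | backward | two
deriving DecidableEq

instance : Fintype Four :=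
  ⟨{Four.zero, Four.forward, Four.backward, Four.two}, fun x => by cases x <;> simp⟩

variable {V E : Type*}

/-- Whether configuration `c` allows traversal of the edge in direction `b`
(`b = true` means from `src` to `tgt`). -/
def allows : Four → Bool → Prop
  | Four.zero, _ => False
  | Four.forward, b => b = true
  | Four.backward, b => b = false
  | Four.two, _ => True

/-- An edge configuration is solid if it is 0-way or 2-way. -/
def IsSolid (c : Four) : Prop := c = Four.zero ∨ c = Four.two

/-- A configuration is 1-way if it is `forward` or `backward`. -/
def IsOneWay (c : Four) : Prop := c = Four.forward ∨ c = Four.backward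

/-- Reversing a configuration: swaps the two 1-way configurations,
fixes 0-way and 2-way. -/
def flipFour : Four → Four
  | Four.forward => Four.backward
  | Four.backward => Four.forward
  | c => c

/-- The 1-way configuration corresponding to direction `b`. -/
def oneWayFour (b : Bool) : Four := if b then Four.forward else Four.backward

/-- Tail of the arc `(e, b)` (the edge `e` traversed in direction `b`). -/
def arcTail (src tgt : E → V) (a : E × Bool) : V := if a.2 then src a.1 else tgt a.1

/-- Head of the arc `(e, b)`. -/
def arcHead (src tgt : E → V) (a : E × Bool) : V := if a.2 then tgt a.1 else src a.1

/-- One-step relation of the digraph `G⃗(A,B;φ)`: there is an arc from `x` to `y`, either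
a traversable directed edge of the fourientation `φ`, or an extra arc from `A ∪ B`. -/
def arcStep (src tgt : E → V) (A B : Set (V × V)) (φ : E → Four) (x y : V) : Prop :=
  (∃ a : E × Bool, allows (φ a.1) a.2 ∧ arcTail src tgt a = x ∧ arcHead src tgt a = y)
    ∨ (x, y) ∈ A ∪ B

/-- Reachability by a directed path in the digraph `G⃗(A,B;φ)`. -/
def reach (src tgt : E → V) (A B : Set (V × V)) (φ : E → Four) : V → V → Prop :=
  Relation.ReflTransGen (arcStep src tgt A B φ)

/-- A fourientation `φ` is `(A,B)`-valid: in `G⃗(A,B;φ)`, for every `(u,v) ∈ A` the vertex `v`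
cannot reach `u`, and for every `(u,v) ∈ B` the vertex `v` can reach `u`. -/
def IsValid (src tgt : E → V) (A B : Set (V × V)) (φ : E → Four) : Prop :=
  (∀ p ∈ A, ¬ reach src tgt A B φ p.2 p.1) ∧ (∀ p ∈ B, reach src tgt A B φ p.2 p.1)

/-- The set of solid edges of a fourientation. -/
def solidSet (φ : E → Four) : Set E := {e | IsSolid (φ e)}

/-- The fourientation associated to an orientation `σ : E → Bool` (every edge 1-way). -/
def toFour (σ : E → Bool) : E → Four := fun e => oneWayFour (σ e)

open Classical in
/-- The fourientation associated to a (spanning) subgraph `F ⊆ E`: edges of `F` are 2-way,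
the other edges are 0-way. -/
noncomputable def toFourSub (F : Set E) : E → Four :=
  fun e => if e ∈ F then Four.two else Four.zero

/-- The arc `(e,b)` is the arc of a 1-way edge of `φ`. -/
def oneWayArc (φ : E → Four) (a : E × Bool) : Prop := φ a.1 = oneWayFour a.2

/-- `Cyc(φ)`: the set of cyclic 1-way edges (arcs) of the fourientation `φ`, in the digraph
`G⃗(A,B;φ)`: the head of the arc can reach its tail. -/
def CycSet (src tgt : E → V) (A B : Set (V × V)) (φ : E → Four) : Set (E × Bool) :=
  {a | oneWayArc φ a ∧ reach src tgt A B φ (arcHead src tgt a) (arcTail src tgt a)}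

/-- `Acy(φ)`: the set of acyclic 1-way edges (arcs) of the fourientation `φ`. -/
def AcySet (src tgt : E → V) (A B : Set (V × V)) (φ : E → Four) : Set (E × Bool) :=
  {a | oneWayArc φ a ∧ ¬ reach src tgt A B φ (arcHead src tgt a) (arcTail src tgt a)}

/-- `l` is (the arc sequence of) a directed cycle: a nonempty closed chain of arcs
visiting no vertex twice. -/
def IsDirCycle (src tgt : E → V) (l : List (E × Bool)) : Prop :=
  ∃ h : l ≠ [],
    l.Chain' (fun a b => arcHead src tgt a = arcTail src tgt b) ∧
    arcHead src tgt (l.getLast h) = arcTail src tgt (l.head h) ∧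
    (l.map (arcTail src tgt)).Nodup

/-- Reversing the directed cycle `l` in the fourientation `φ`: all 1-way edges on the cycle are
reversed, other edges (in particular 2-way edges of the cycle) are unchanged. -/
def revCyc [DecidableEq E] (φ : E → Four) (l : List (E × Bool)) : E → Four :=
  fun e => if (e, true) ∈ l ∨ (e, false) ∈ l then flipFour (φ e) else φ e

/-- One cycle-reversal move: `ψ` is obtained from `φ` by reversing a directed cycle of `φ`. -/
def CycleStep (src tgt : E → V) [DecidableEq E] (φ ψ : E → Four) : Prop :=
  ∃ l, IsDirCycle src tgt l ∧ (∀ a ∈ l, allows (φ a.1) a.2) ∧ ψ = revCyc φ l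

/-- The edge `e` crosses the cut given by `V1` (in either direction). -/
def edgeCrosses (src tgt : E → V) (V1 : Set V) (e : E) : Prop :=
  (src e ∈ V1 ∧ tgt e ∉ V1) ∨ (tgt e ∈ V1 ∧ src e ∉ V1)

/-- The cut `V1 / V1ᶜ` defines a directed `(A,B)`-cocycle of `G⃗(A,B;φ)`: the set of arcs from
`V1` to `V1ᶜ` is nonempty, no arc of the digraph goes from `V1ᶜ` to `V1`, and no arc of
`A ∪ B` crosses the cut (in either direction). -/
def IsABCocycleCut (src tgt : E → V) (A B : Set (V × V)) (φ : E → Four) (V1 : Set V) : Prop :=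
  (∃ a : E × Bool, allows (φ a.1) a.2 ∧ arcTail src tgt a ∈ V1 ∧ arcHead src tgt a ∉ V1) ∧
  (∀ a : E × Bool, allows (φ a.1) a.2 → ¬ (arcTail src tgt a ∉ V1 ∧ arcHead src tgt a ∈ V1)) ∧
  (∀ p ∈ A ∪ B, ((p : V × V).1 ∈ V1 ↔ p.2 ∈ V1))

open Classical in
/-- Reversing the directed cocycle given by the cut `V1`: all 1-way edges crossing the cut are
reversed, other edges (in particular 0-way edges crossing the cut) are unchanged. -/
noncomputable def revCut (src tgt : E → V) (φ : E → Four) (V1 : Set V) : E → Four :=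
  fun e => if edgeCrosses src tgt V1 e then flipFour (φ e) else φ e

/-- One cocycle-reversal move: `ψ` is obtained from `φ` by reversing a directed
`(A,B)`-cocycle of `φ`. -/
def CocycleStep (src tgt : E → V) (A B : Set (V × V)) (φ ψ : E → Four) : Prop :=
  ∃ V1 : Set V, IsABCocycleCut src tgt A B φ V1 ∧ ψ = revCut src tgt φ V1

/-- One cycle- or cocycle-reversal move. -/
def CCStep (src tgt : E → V) (A B : Set (V × V)) [DecidableEq E] (φ ψ : E → Four) : Prop :=
  CycleStep src tgt φ ψ ∨ CocycleStep src tgt A B φ ψ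

/-- `φ` contains no cycle (of the graph `G`) made entirely of 2-way edges. -/
def NoTwoWayCycle (src tgt : E → V) (φ : E → Four) : Prop :=
  ¬ ∃ l : List (E × Bool), IsDirCycle src tgt l ∧ (l.map Prod.fst).Nodup ∧
      ∀ a ∈ l, φ a.1 = Four.two

/-- `φ` contains no `(A,B)`-cocycle (of the graph `G`) made entirely of 0-way edges:
there is no cut, not crossed by any arc of `A ∪ B`, crossed by at least one edge of `G`,
all of whose crossing edges are 0-way. -/
def NoZeroWayCocycle (src tgt : E → V) (A B : Set (V × V)) (φ : E → Four) : Prop :=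
  ¬ ∃ V1 : Set V, (∃ e, edgeCrosses src tgt V1 e) ∧
      (∀ e, edgeCrosses src tgt V1 e → φ e = Four.zero) ∧
      (∀ p ∈ A ∪ B, ((p : V × V).1 ∈ V1 ↔ p.2 ∈ V1))

/-- The subgraph `F` contains no cycle (it is a forest). -/
def NoCycleIn (src tgt : E → V) (F : Set E) : Prop :=
  ¬ ∃ l : List (E × Bool), IsDirCycle src tgt l ∧ (l.map Prod.fst).Nodup ∧ ∀ a ∈ l, a.1 ∈ F

/-- One undirected adjacency step in the graph `F ∪ A̲ ∪ B̲`. -/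
def usym (src tgt : E → V) (A B : Set (V × V)) (F : Set E) (x y : V) : Prop :=
  (∃ e ∈ F, (src e = x ∧ tgt e = y) ∨ (src e = y ∧ tgt e = x)) ∨
  (∃ p ∈ A ∪ B, ((p : V × V) = (x, y) ∨ p = (y, x)))

/-- Connectivity (by undirected paths) in the graph `F ∪ A̲ ∪ B̲`. -/
def ureach (src tgt : E → V) (A B : Set (V × V)) (F : Set E) : V → V → Prop :=
  Relation.ReflTransGen (usym src tgt A B F)

/-- The subgraph `F` is `(A,B)`-connected: the connected components of `F ∪ A̲ ∪ B̲`
coincide with those of `G ∪ A̲ ∪ B̲`. -/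
def ABConnected (src tgt : E → V) (A B : Set (V × V)) (F : Set E) : Prop :=
  ∀ x y, ureach src tgt A B F x y ↔ ureach src tgt A B Set.univ x y


/-- The list of arcs `l` contains no 1-way edge having the same orientation in `φ` and `φ'`. -/
def okCycList (φ φ' : E → Four) (l : List (E × Bool)) : Prop :=
  ∀ a ∈ l, ¬ (IsOneWay (φ a.1) ∧ φ a.1 = φ' a.1)

/-- The cut `V1` is crossed by no 1-way edge having the same orientation in `φ` and `φ'`. -/
def okCut (src tgt : E → V) (φ φ' : E → Four) (V1 : Set V) : Prop :=
  ∀ e, edgeCrosses src tgt V1 e → ¬ (IsOneWay (φ e) ∧ φ e = φ' e)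

/-- Cycle-reversal move restricted to directed cycles containing no 1-way edge with the same
orientation in `φ` and `φ'`. -/
def RCycleStep (src tgt : E → V) [DecidableEq E] (φ φ' ψ ψ' : E → Four) : Prop :=
  ∃ l, IsDirCycle src tgt l ∧ (∀ a ∈ l, allows (ψ a.1) a.2) ∧ okCycList φ φ' l ∧
    ψ' = revCyc ψ l

/-- `(A,B)`-cocycle-reversal move restricted to cocycles containing no 1-way edge with the
same orientation in `φ` and `φ'`. -/
def RCocycleStep (src tgt : E → V) (A B : Set (V × V)) (φ φ' ψ ψ' : E → Four) : Prop :=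
  ∃ V1 : Set V, IsABCocycleCut src tgt A B ψ V1 ∧ okCut src tgt φ φ' V1 ∧
    ψ' = revCut src tgt ψ V1

/-! ### Auxiliary development for Statement 16 -/

section Stmt16Aux

open Relation

/-! #### Facts about `Four` -/

lemma flipFour_flipFour (c : Four) : flipFour (flipFour c) = c := by cases c <;> rfl

def typFour : Four → ℕ
  | Four.zero => 0
  | Four.two => 2
  | _ => 1

lemma typFour_flip (c : Four) : typFour (flipFour c) = typFour c := by cases c <;> rfl

lemma isOneWay_iff_typ {c : Four} : IsOneWay c ↔ typFour c = 1 := by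
  cases c <;> simp [IsOneWay, typFour]

lemma typ_eq_two_iff {c : Four} : typFour c = 2 ↔ c = Four.two := by
  cases c <;> simp [typFour]

lemma typ_eq_zero_iff {c : Four} : typFour c = 0 ↔ c = Four.zero := by
  cases c <;> simp [typFour]

lemma oneWayFour_inj {b c : Bool} (h : oneWayFour b = oneWayFour c) : b = c := by
  cases b <;> cases c <;> simp_all [oneWayFour]

lemma flip_oneWayFour (b : Bool) : flipFour (oneWayFour b) = oneWayFour (!b) := by
  cases b <;> rfl

lemma allows_oneWayFour {b c : Bool} : allows (oneWayFour b) c ↔ c = b := by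
  cases b <;> cases c <;> simp [oneWayFour, allows]

lemma exists_oneWay_of_typ_one {c : Four} (h : typFour c = 1) : ∃ b, c = oneWayFour b := by
  cases c
  · simp [typFour] at h
  · exact ⟨true, rfl⟩
  · exact ⟨false, rfl⟩
  · simp [typFour] at h

lemma disagree_flip {a b : Four} (ht : typFour a = typFour b) (hne : a ≠ b) :
    ∃ c : Bool, a = oneWayFour c ∧ b = oneWayFour (!c) := by
  cases a <;> cases b <;> first
    | exact ⟨true, rfl, rfl⟩
    | exact ⟨false, rfl, rfl⟩
    | simp_all [typFour]

lemma oneWay_oneWayFour (b : Bool) : IsOneWay (oneWayFour b) := by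
  cases b
  · exact Or.inr rfl
  · exact Or.inl rfl

variable {V : Type*}

/-! #### Abstract walks -/

variable {α : Type*}

def AWalk (tl hd : α → V) (P : α → Prop) : List α → V → V → Prop
  | [], x, y => x = y
  | a :: l, x, y => P a ∧ tl a = x ∧ AWalk tl hd P l (hd a) y

variable {tl hd : α → V} {P : α → Prop}

@[simp] lemma awalk_nil {x y : V} : AWalk tl hd P [] x y ↔ x = y := Iff.rfl

@[simp] lemma awalk_cons {a : α} {l : List α} {x y : V} :
    AWalk tl hd P (a :: l) x y ↔ P a ∧ tl a = x ∧ AWalk tl hd P l (hd a) y := Iff.rfl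

lemma awalk_append {l₁ l₂ : List α} {x y : V} :
    AWalk tl hd P (l₁ ++ l₂) x y ↔ ∃ z, AWalk tl hd P l₁ x z ∧ AWalk tl hd P l₂ z y := by
  induction l₁ generalizing x with
  | nil => simp
  | cons a l ih => simp [ih, and_assoc]

lemma awalk_of_rtg {r : V → V → Prop}
    (hr : ∀ x y, r x y → ∃ a, P a ∧ tl a = x ∧ hd a = y) {x y : V}
    (h : Relation.ReflTransGen r x y) : ∃ l, AWalk tl hd P l x y := by
  induction h using Relation.ReflTransGen.head_induction_on with
  | refl => exact ⟨[], rfl⟩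
  | head hstep _ ih =>
    obtain ⟨l, hl⟩ := ih
    obtain ⟨a, ha, hta, hha⟩ := hr _ _ hstep
    exact ⟨a :: l, ha, hta, hha ▸ hl⟩

lemma rtg_of_awalk {r : V → V → Prop} {l : List α} {x y : V}
    (h : AWalk tl hd P l x y) (hr : ∀ a, P a → r (tl a) (hd a)) :
    Relation.ReflTransGen r x y := by
  induction l generalizing x with
  | nil => exact h ▸ Relation.ReflTransGen.refl
  | cons a l ih =>
    obtain ⟨hp, hta, hw⟩ := h
    exact Relation.ReflTransGen.head (hta ▸ hr a hp) (ih hw)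

lemma awalk_sum_telescope (f : V → ℤ) {l : List α} {x y : V}
    (h : AWalk tl hd P l x y) :
    (l.map (fun a => f (hd a) - f (tl a))).sum = f y - f x := by
  induction l generalizing x with
  | nil => obtain rfl : x = y := h; simp
  | cons a l ih =>
    obtain ⟨hp, hta, hw⟩ := h
    simp only [List.map_cons, List.sum_cons, ih hw, hta]
    ring

lemma awalk_chain' {l : List α} {x y : V} (h : AWalk tl hd P l x y) :
    l.Chain' (fun a b => hd a = tl b) := by
  induction l generalizing x with
  | nil => exact List.isChain_nil
  | cons a l ih =>
    obtain ⟨hp, hta, hw⟩ := h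
    refine List.isChain_cons.2 ⟨?_, ih hw⟩
    intro b hb
    cases l with
    | nil => simp at hb
    | cons c l' =>
      obtain ⟨hp', htc, _⟩ := hw
      have hb' : c = b := by simpa using hb
      exact hb' ▸ htc.symm

lemma awalk_getLast {l : List α} {x y : V} (h : AWalk tl hd P l x y) (hne : l ≠ []) :
    hd (l.getLast hne) = y := by
  induction l generalizing x with
  | nil => exact absurd rfl hne
  | cons a l ih =>
    obtain ⟨hp, hta, hw⟩ := h
    cases l with
    | nil => exact (awalk_nil.1 hw).symm ▸ rfl
    | cons c l' => simpa [List.getLast_cons] using ih hw (by simp)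

lemma awalk_tails_concat {l : List α} {x y : V} (h : AWalk tl hd P l x y) :
    l.map tl ++ [y] = x :: l.map hd := by
  induction l generalizing x with
  | nil => obtain rfl : x = y := h; simp
  | cons a l ih =>
    obtain ⟨hp, hta, hw⟩ := h
    simp [← hta, ih hw]

lemma awalk_of_chain' {l : List α} (hne : l ≠ [])
    (hP : ∀ a ∈ l, P a) (hc : l.Chain' (fun a b => hd a = tl b)) :
    AWalk tl hd P l (tl (l.head hne)) (hd (l.getLast hne)) := by
  induction l with
  | nil => exact absurd rfl hne
  | cons a l ih =>
    cases l with
    | nil => exact ⟨hP a (by simp), rfl, rfl⟩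
    | cons c l' =>
      have hc' := List.isChain_cons_cons.1 hc
      refine ⟨hP a (by simp), rfl, ?_⟩
      have := ih (by simp) (fun b hb => hP b (by simp [hb])) hc'.2
      rw [List.getLast_cons (by simp : (c :: l') ≠ [])]
      simpa [hc'.1] using this

lemma awalk_mem {l : List α} {x y : V} (h : AWalk tl hd P l x y) {a : α} (ha : a ∈ l) : P a := by
  induction l generalizing x with
  | nil => simp at ha
  | cons b l ih =>
    obtain ⟨hp, _, hw⟩ := h
    rcases List.mem_cons.1 ha with rfl | ha'
    · exact hp
    · exact ih hw ha'

lemma awalk_shorten_aux (n : ℕ) : ∀ (l : List α) (x y : V), l.length ≤ n →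
    AWalk tl hd P l x y →
    ∃ l', AWalk tl hd P l' x y ∧ (∀ a ∈ l', a ∈ l) ∧ (x :: l'.map hd).Nodup := by
  induction n with
  | zero =>
    intro l x y hlen h
    rw [Nat.le_zero, List.length_eq_zero_iff] at hlen
    subst hlen
    exact ⟨[], h, by simp, by simp⟩
  | succ n ih =>
    intro l x y hlen h
    by_cases hx : x ∈ l.map hd
    · obtain ⟨a, ha, hha⟩ := List.mem_map.1 hx
      obtain ⟨l₁, l₂, rfl⟩ := List.append_of_mem ha
      obtain ⟨z, hw₁, hw₂⟩ := awalk_append.1 h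
      obtain ⟨hp, hta, hw₂'⟩ := hw₂
      rw [hha] at hw₂'
      obtain ⟨l', hl', hsub, hnd⟩ := ih l₂ x y (by simp at hlen; omega) hw₂'
      exact ⟨l', hl', fun b hb => by simp [hsub b hb], hnd⟩
    · cases l with
      | nil => exact ⟨[], h, by simp, by simp⟩
      | cons a l0 =>
        obtain ⟨hp, hta, hw⟩ := h
        obtain ⟨l', hl', hsub, hnd⟩ := ih l0 (hd a) y (by simp at hlen; omega) hw
        refine ⟨a :: l', ⟨hp, hta, hl'⟩, ?_, ?_⟩
        · intro b hb
          rcases List.mem_cons.1 hb with rfl | hb'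
          · simp
          · simp [hsub b hb']
        · rw [List.map_cons]
          refine List.nodup_cons.2 ⟨?_, hnd⟩
          intro hmem
          apply hx
          rcases List.mem_cons.1 hmem with heq | hmem'
          · exact heq ▸ List.mem_map.2 ⟨a, by simp, rfl⟩
          · obtain ⟨b, hb, hbe⟩ := List.mem_map.1 hmem'
            exact List.mem_map.2 ⟨b, by simp [hsub b hb], hbe⟩

lemma awalk_shorten {l : List α} {x y : V} (h : AWalk tl hd P l x y) :
    ∃ l', AWalk tl hd P l' x y ∧ (∀ a ∈ l', a ∈ l) ∧ (x :: l'.map hd).Nodup :=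
  awalk_shorten_aux l.length l x y le_rfl h

lemma rtg_lift {r s : V → V → Prop} (h : ∀ x y, r x y → Relation.ReflTransGen s x y)
    {x y : V} (hr : Relation.ReflTransGen r x y) : Relation.ReflTransGen s x y := by
  induction hr with
  | refl => exact Relation.ReflTransGen.refl
  | tail _ hstep ih => exact ih.trans (h _ _ hstep)

lemma list_sum_map_sub {l : List α} (f g : α → ℤ) :
    (l.map (fun a => f a - g a)).sum = (l.map f).sum - (l.map g).sum := by
  induction l with
  | nil => simp
  | cons a l ih => simp [ih]; ring

end Stmt16Aux

section Stmt16Graph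

set_option linter.unusedSectionVars false

open Relation

variable {V E : Type*} [DecidableEq E] {src tgt : E → V} {A B : Set (V × V)}

def allowArc (χ : E → Four) (a : E × Bool) : Prop := allows (χ a.1) a.2

def flipArc (a : E × Bool) : E × Bool := (a.1, !a.2)

lemma arcTail_flipArc (a : E × Bool) : arcTail src tgt (flipArc a) = arcHead src tgt a := by
  obtain ⟨e, b⟩ := a; cases b <;> rfl

lemma arcHead_flipArc (a : E × Bool) : arcHead src tgt (flipArc a) = arcTail src tgt a := by
  obtain ⟨e, b⟩ := a; cases b <;> rfl

lemma four_cases (c : Four) : c = Four.zero ∨ c = Four.two ∨ ∃ b, c = oneWayFour b := by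
  cases c
  · exact Or.inl rfl
  · exact Or.inr (Or.inr ⟨true, rfl⟩)
  · exact Or.inr (Or.inr ⟨false, rfl⟩)
  · exact Or.inr (Or.inl rfl)

lemma allows_flip {c : Four} {b : Bool} (h : allows c b) : allows (flipFour c) (!b) := by
  cases c <;> simp_all [allows, flipFour]

lemma arcStep_of_arc {χ : E → Four} {a : E × Bool} (h : allowArc χ a) :
    arcStep src tgt A B χ (arcTail src tgt a) (arcHead src tgt a) := Or.inl ⟨a, h, rfl, rfl⟩

lemma reach_of_awalk_arcs {χ : E → Four} {l : List (E × Bool)} {x y : V}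
    (h : AWalk (arcTail src tgt) (arcHead src tgt) (allowArc χ) l x y) :
    reach src tgt A B χ x y :=
  rtg_of_awalk h (fun _ ha => arcStep_of_arc ha)

lemma closed_walk_reach {χ : E → Four} {l : List (E × Bool)} {v : V}
    (hw : AWalk (arcTail src tgt) (arcHead src tgt) (allowArc χ) l v v) :
    ∀ a ∈ l, reach src tgt A B χ (arcHead src tgt a) (arcTail src tgt a) := by
  intro a ha
  obtain ⟨l₁, l₂, rfl⟩ := List.append_of_mem ha
  obtain ⟨z, hw₁, hp, hta, hw₂⟩ := awalk_append.1 hw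
  exact (reach_of_awalk_arcs (A := A) (B := B) hw₂).trans
    (hta ▸ reach_of_awalk_arcs (A := A) (B := B) hw₁)

lemma cycle_closed_walk {χ : E → Four} {l : List (E × Bool)}
    (hc : IsDirCycle src tgt l) (hall : ∀ a ∈ l, allows (χ a.1) a.2) :
    ∃ v, l ≠ [] ∧ AWalk (arcTail src tgt) (arcHead src tgt) (allowArc χ) l v v := by
  obtain ⟨hne, hchain, hclose, hnd⟩ := hc
  refine ⟨arcTail src tgt (l.head hne), hne, ?_⟩
  have := awalk_of_chain' (P := allowArc χ) hne hall hchain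
  rwa [hclose] at this

lemma revCyc_mem {χ : E → Four} {l : List (E × Bool)} {e : E}
    (h : (e, true) ∈ l ∨ (e, false) ∈ l) : revCyc χ l e = flipFour (χ e) := if_pos h

lemma revCyc_not_mem {χ : E → Four} {l : List (E × Bool)} {e : E}
    (h : ¬((e, true) ∈ l ∨ (e, false) ∈ l)) : revCyc χ l e = χ e := if_neg h

lemma mem_or_of_mem {l : List (E × Bool)} {a : E × Bool} (ha : a ∈ l) :
    (a.1, true) ∈ l ∨ (a.1, false) ∈ l := by
  cases hb : a.2
  · right; rw [← hb]; rwa [Prod.mk.eta]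
  · left; rw [← hb]; rwa [Prod.mk.eta]

lemma mem_dir {χ : E → Four} {l : List (E × Bool)} (hall : ∀ a ∈ l, allowArc χ a)
    {e : E} {b c : Bool} (hme : (e, b) ∈ l) (hone : χ e = oneWayFour c) : b = c := by
  have := hall _ hme
  unfold allowArc at this
  rw [hone] at this
  exact allows_oneWayFour.1 this

lemma mem_flip_iff {l : List (E × Bool)} {e : E} {b : Bool} :
    (e, b) ∈ l.map flipArc ↔ (e, !b) ∈ l := by
  simp only [List.mem_map, flipArc]
  constructor
  · rintro ⟨⟨e', b'⟩, h, heq⟩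
    obtain ⟨h1, h2⟩ := Prod.ext_iff.1 heq
    subst h1
    subst h2
    simpa [Bool.not_not] using h
  · intro h
    exact ⟨(e, !b), h, by simp⟩

lemma mem_edges_reverse_flip {l : List (E × Bool)} {e : E} :
    ((e, true) ∈ (l.map flipArc).reverse ∨ (e, false) ∈ (l.map flipArc).reverse) ↔
      ((e, true) ∈ l ∨ (e, false) ∈ l) := by
  rw [List.mem_reverse, List.mem_reverse, mem_flip_iff, mem_flip_iff]
  simp [or_comm]

lemma awalk_reverse_flip {P P' : E × Bool → Prop} {l : List (E × Bool)} {x y : V}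
    (h : AWalk (arcTail src tgt) (arcHead src tgt) P l x y)
    (hP : ∀ a ∈ l, P' (flipArc a)) :
    AWalk (arcTail src tgt) (arcHead src tgt) P' ((l.map flipArc).reverse) y x := by
  induction l generalizing x with
  | nil => obtain rfl : x = y := h; exact rfl
  | cons a l ih =>
    obtain ⟨hp, hta, hw⟩ := h
    have hiw := ih hw (fun b hb => hP b (by simp [hb]))
    rw [List.map_cons, List.reverse_cons]
    refine awalk_append.2 ⟨arcHead src tgt a, hiw, hP a (by simp), arcTail_flipArc a, ?_⟩
    rw [arcHead_flipArc, hta]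
    rfl

lemma arcStep_reach_of_rev {χ₁ χ₂ : E → Four} {l : List (E × Bool)} {v : V}
    (hw : AWalk (arcTail src tgt) (arcHead src tgt) (allowArc χ₁) l v v)
    (hflip : ∀ e, ((e, true) ∈ l ∨ (e, false) ∈ l) → χ₂ e = flipFour (χ₁ e))
    (hsame : ∀ e, ¬((e, true) ∈ l ∨ (e, false) ∈ l) → χ₂ e = χ₁ e) :
    ∀ x y, arcStep src tgt A B χ₂ x y → reach src tgt A B χ₁ x y := by
  have hall : ∀ a ∈ l, allowArc χ₁ a := fun a ha => awalk_mem hw ha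
  intro x y hstep
  rcases hstep with ⟨a, ha, hta, hha⟩ | hab
  · by_cases hmem : (a.1, true) ∈ l ∨ (a.1, false) ∈ l
    · have he' : χ₂ a.1 = flipFour (χ₁ a.1) := hflip _ hmem
      rcases four_cases (χ₁ a.1) with hc | hc | ⟨c, hc⟩
      · exfalso
        rw [he', hc] at ha
        exact ha
      · refine Relation.ReflTransGen.single (Or.inl ⟨a, ?_, hta, hha⟩)
        rw [hc]
        trivial
      · -- one-way flipped edge: use the cycle to go around
        have hb : a.2 = !c := by
          rw [he', hc, flip_oneWayFour] at ha
          exact allows_oneWayFour.1 ha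
        have hmemc : (a.1, c) ∈ l := by
          rcases hmem with h1 | h1
          · rwa [mem_dir hall h1 hc] at h1
          · rwa [mem_dir hall h1 hc] at h1
        have hr := closed_walk_reach (A := A) (B := B) hw _ hmemc
        have hx : x = arcHead src tgt (a.1, c) := by
          rw [← hta, ← arcTail_flipArc (a.1, c)]
          simp [flipArc, ← hb]
        have hy : y = arcTail src tgt (a.1, c) := by
          rw [← hha, ← arcHead_flipArc (a.1, c)]
          simp [flipArc, ← hb]
        rw [hx, hy]
        exact hr
    · refine Relation.ReflTransGen.single (Or.inl ⟨a, ?_, hta, hha⟩)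
      rw [← hsame _ hmem]
      exact ha
  · exact Relation.ReflTransGen.single (Or.inr hab)

lemma reach_revCyc {χ : E → Four} {l : List (E × Bool)} {v : V}
    (hw : AWalk (arcTail src tgt) (arcHead src tgt) (allowArc χ) l v v) :
    ∀ x y, reach src tgt A B (revCyc χ l) x y ↔ reach src tgt A B χ x y := by
  have hall : ∀ a ∈ l, allowArc χ a := fun a ha => awalk_mem hw ha
  set χ' := revCyc χ l with hχ'
  have hP' : ∀ a ∈ l, allowArc χ' (flipArc a) := by
    intro a ha
    have : χ' a.1 = flipFour (χ a.1) := revCyc_mem (mem_or_of_mem ha)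
    unfold allowArc
    show allows (χ' (flipArc a).1) (!a.2)
    rw [show (flipArc a).1 = a.1 from rfl, this]
    exact allows_flip (hall a ha)
  have hw' : AWalk (arcTail src tgt) (arcHead src tgt) (allowArc χ') ((l.map flipArc).reverse) v v :=
    awalk_reverse_flip hw hP'
  intro x y
  constructor
  · exact fun h => rtg_lift (arcStep_reach_of_rev hw
      (fun e he => revCyc_mem he) (fun e he => revCyc_not_mem he)) h
  · refine fun h => rtg_lift (arcStep_reach_of_rev hw' ?_ ?_) h
    · intro e he
      rw [mem_edges_reverse_flip] at he
      rw [hχ', revCyc_mem he, flipFour_flipFour]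
    · intro e he
      rw [mem_edges_reverse_flip] at he
      rw [hχ']
      exact (revCyc_not_mem he).symm

/-- `e` is a cyclic one-way edge of `χ`. -/
def cycE (src tgt : E → V) (A B : Set (V × V)) (χ : E → Four) (e : E) : Prop :=
  ∃ b, χ e = oneWayFour b ∧
    reach src tgt A B χ (arcHead src tgt (e, b)) (arcTail src tgt (e, b))

lemma not_cycE_of_solid {χ : E → Four} {e : E}
    (h : χ e = Four.zero ∨ χ e = Four.two) : ¬ cycE src tgt A B χ e := by
  rintro ⟨b, hb, -⟩
  rcases h with h | h <;> rw [h] at hb <;> cases b <;> simp [oneWayFour] at hb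

lemma cycE_revCyc {χ : E → Four} {l : List (E × Bool)} {v : V}
    (hw : AWalk (arcTail src tgt) (arcHead src tgt) (allowArc χ) l v v) (e : E) :
    cycE src tgt A B χ e ↔ cycE src tgt A B (revCyc χ l) e := by
  have hall : ∀ a ∈ l, allowArc χ a := fun a ha => awalk_mem hw ha
  have hre := reach_revCyc (A := A) (B := B) hw
  by_cases hmem : (e, true) ∈ l ∨ (e, false) ∈ l
  · rcases four_cases (χ e) with hc | hc | ⟨c, hc⟩
    · have : revCyc χ l e = χ e := by rw [revCyc_mem hmem, hc]; rfl
      exact iff_of_false (not_cycE_of_solid (Or.inl hc)) (not_cycE_of_solid (Or.inl (this ▸ hc)))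
    · have : revCyc χ l e = χ e := by rw [revCyc_mem hmem, hc]; rfl
      exact iff_of_false (not_cycE_of_solid (Or.inr hc)) (not_cycE_of_solid (Or.inr (this ▸ hc)))
    · have hmemc : (e, c) ∈ l := by
        rcases hmem with h1 | h1
        · rwa [mem_dir hall h1 hc] at h1
        · rwa [mem_dir hall h1 hc] at h1
      refine iff_of_true ⟨c, hc, closed_walk_reach (A := A) (B := B) hw _ hmemc⟩ ?_
      refine ⟨!c, by rw [revCyc_mem hmem, hc, flip_oneWayFour], ?_⟩
      rw [show arcHead src tgt (e, !c) = arcTail src tgt (e, c) from arcHead_flipArc (e, c),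
        show arcTail src tgt (e, !c) = arcHead src tgt (e, c) from arcTail_flipArc (e, c)]
      rw [hre]
      exact Relation.ReflTransGen.single (arcStep_of_arc (by unfold allowArc; rw [hc]; exact allows_oneWayFour.2 rfl))
  · have heq : revCyc χ l e = χ e := revCyc_not_mem hmem
    unfold cycE
    rw [heq]
    constructor
    · rintro ⟨b, hb, hr⟩
      exact ⟨b, hb, (hre _ _).2 hr⟩
    · rintro ⟨b, hb, hr⟩
      exact ⟨b, hb, (hre _ _).1 hr⟩

end Stmt16Graph

section Stmt16Cut

set_option linter.unusedSectionVars false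

open Relation

variable {V E : Type*} [DecidableEq E] {src tgt : E → V} {A B : Set (V × V)}
variable {U : Set V} {χ : E → Four}

/-- "No arc enters `U`". -/
def NoIn (src tgt : E → V) (χ : E → Four) (U : Set V) : Prop :=
  ∀ a : E × Bool, allows (χ a.1) a.2 → arcHead src tgt a ∈ U → arcTail src tgt a ∈ U

def NoOut (src tgt : E → V) (χ : E → Four) (U : Set V) : Prop :=
  ∀ a : E × Bool, allows (χ a.1) a.2 → arcTail src tgt a ∈ U → arcHead src tgt a ∈ U

def ABSame (A B : Set (V × V)) (U : Set V) : Prop :=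
  ∀ p ∈ A ∪ B, ((p : V × V).1 ∈ U ↔ p.2 ∈ U)

lemma reach_mem_of_noIn (hNoIn : NoIn src tgt χ U) (hAB : ABSame A B U) {u v : V}
    (h : reach src tgt A B χ u v) : v ∈ U → u ∈ U := by
  induction h with
  | refl => exact id
  | tail h1 h2 ih =>
    intro hv
    apply ih
    rcases h2 with ⟨a, ha, hta, hha⟩ | hab
    · exact hta ▸ hNoIn a ha (hha ▸ hv)
    · exact (hAB _ hab).2 hv

lemma reach_mem_of_noOut (hNoOut : NoOut src tgt χ U) (hAB : ABSame A B U) {u v : V}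
    (h : reach src tgt A B χ u v) : u ∈ U → v ∈ U := by
  induction h using Relation.ReflTransGen.head_induction_on with
  | refl => exact id
  | head h1 h2 ih =>
    intro hu
    apply ih
    rcases h1 with ⟨a, ha, hta, hha⟩ | hab
    · exact hha ▸ hNoOut a ha (hta ▸ hu)
    · exact (hAB _ hab).1 hu

lemma revCut_cross {e : E} (h : edgeCrosses src tgt U e) :
    revCut src tgt χ U e = flipFour (χ e) := if_pos h

lemma revCut_not_cross {e : E} (h : ¬ edgeCrosses src tgt U e) :
    revCut src tgt χ U e = χ e := if_neg h

lemma not_cross_iff {e : E} : ¬ edgeCrosses src tgt U e ↔ (src e ∈ U ↔ tgt e ∈ U) := by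
  unfold edgeCrosses
  tauto

lemma arc_side_iff {a : E × Bool} (h : src a.1 ∈ U ↔ tgt a.1 ∈ U) :
    (arcTail src tgt a ∈ U ↔ arcHead src tgt a ∈ U) := by
  obtain ⟨e, b⟩ := a
  cases b
  · exact h.symm
  · exact h

lemma not_cross_of_arc_side {a : E × Bool}
    (h : arcTail src tgt a ∈ U ↔ arcHead src tgt a ∈ U) : ¬ edgeCrosses src tgt U a.1 := by
  rw [not_cross_iff]
  obtain ⟨e, b⟩ := a
  cases b
  · exact h.symm
  · exact h

lemma cross_cases {e : E} (h : edgeCrosses src tgt U e) (b : Bool) :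
    (arcTail src tgt (e, b) ∈ U ∧ arcHead src tgt (e, b) ∉ U) ∨
    (arcTail src tgt (e, b) ∉ U ∧ arcHead src tgt (e, b) ∈ U) := by
  rcases h with ⟨h1, h2⟩ | ⟨h1, h2⟩ <;> cases b <;> simp [arcTail, arcHead, h1, h2]

lemma no_two_of_cross (hNoIn : NoIn src tgt χ U) {e : E}
    (hcr : edgeCrosses src tgt U e) : χ e ≠ Four.two := by
  intro h2
  have hb : ∀ b : Bool, allows (χ e) b := by intro b; rw [h2]; trivial
  rcases cross_cases (src := src) (tgt := tgt) hcr true with ⟨ht, hh⟩ | ⟨ht, hh⟩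
  · exact hh (hNoIn (e, false) (hb false) ht)
  · exact ht (hNoIn (e, true) (hb true) hh)

/-- The arc of a crossing one-way edge, under `NoIn`, goes out of `U`. -/
lemma cross_one_way_dir (hNoIn : NoIn src tgt χ U) {e : E} {c : Bool}
    (hcr : edgeCrosses src tgt U e) (hc : χ e = oneWayFour c) :
    arcTail src tgt (e, c) ∈ U ∧ arcHead src tgt (e, c) ∉ U := by
  rcases cross_cases (src := src) (tgt := tgt) hcr c with h | ⟨h1, h2⟩
  · exact h
  · exact absurd (hNoIn (e, c) (by rw [hc]; exact allows_oneWayFour.2 rfl) h2) h1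

lemma noOut_revCut (hNoIn : NoIn src tgt χ U) :
    NoOut src tgt (revCut src tgt χ U) U := by
  intro a ha hta
  by_cases hcr : edgeCrosses src tgt U a.1
  · exfalso
    rcases four_cases (χ a.1) with hc | hc | ⟨c, hc⟩
    · rw [revCut_cross hcr, hc] at ha
      exact ha
    · exact no_two_of_cross hNoIn hcr hc
    · have hb : a.2 = !c := by
        rw [revCut_cross hcr, hc, flip_oneWayFour] at ha
        exact allows_oneWayFour.1 ha
      have hdir := cross_one_way_dir hNoIn hcr hc
      have haf : a = flipArc (a.1, c) := by simp [flipArc, ← hb]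
      rw [haf, arcTail_flipArc] at hta
      exact hdir.2 hta
  · rw [revCut_not_cross hcr] at ha
    exact (arc_side_iff (not_cross_iff.1 hcr)).1 hta

lemma reach_revCut_in_mp (hNoIn : NoIn src tgt χ U) (hAB : ABSame A B U) {u v : V}
    (h : reach src tgt A B χ u v) : v ∈ U → reach src tgt A B (revCut src tgt χ U) u v := by
  induction h with
  | refl => exact fun _ => Relation.ReflTransGen.refl
  | @tail w v' h1 h2 ih =>
    intro hv
    have hw : w ∈ U := by
      rcases h2 with ⟨a, ha, hta, hha⟩ | hab
      · exact hta ▸ hNoIn a ha (hha ▸ hv)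
      · exact (hAB _ hab).2 hv
    refine (ih hw).tail ?_
    rcases h2 with ⟨a, ha, hta, hha⟩ | hab
    · refine Or.inl ⟨a, ?_, hta, hha⟩
      have hncr : ¬ edgeCrosses src tgt U a.1 :=
        not_cross_of_arc_side (iff_of_true (hta ▸ hw) (hha ▸ hv))
      rw [revCut_not_cross hncr]
      exact ha
    · exact Or.inr hab

lemma reach_revCut_in_mpr (hNoIn : NoIn src tgt χ U) (hAB : ABSame A B U) {u v : V}
    (h : reach src tgt A B (revCut src tgt χ U) u v) :
    u ∈ U → reach src tgt A B χ u v := by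
  have hNoOut' := noOut_revCut (src := src) (tgt := tgt) hNoIn
  induction h using Relation.ReflTransGen.head_induction_on with
  | refl => exact fun _ => Relation.ReflTransGen.refl
  | @head u' w h1 hrest ih =>
    intro hu
    have hw : w ∈ U := by
      rcases h1 with ⟨a, ha, hta, hha⟩ | hab
      · exact hha ▸ hNoOut' a ha (hta ▸ hu)
      · exact (hAB _ hab).1 hu
    refine Relation.ReflTransGen.head ?_ (ih hw)
    rcases h1 with ⟨a, ha, hta, hha⟩ | hab
    · refine Or.inl ⟨a, ?_, hta, hha⟩
      have hncr : ¬ edgeCrosses src tgt U a.1 :=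
        not_cross_of_arc_side (iff_of_true (hta ▸ hu) (hha ▸ hw))
      rw [revCut_not_cross hncr] at ha
      exact ha
    · exact Or.inr hab

lemma reach_revCut_out_mp (hNoIn : NoIn src tgt χ U) (hAB : ABSame A B U) {u v : V}
    (h : reach src tgt A B χ u v) : u ∉ U → reach src tgt A B (revCut src tgt χ U) u v := by
  induction h using Relation.ReflTransGen.head_induction_on with
  | refl => exact fun _ => Relation.ReflTransGen.refl
  | @head u' w h1 hrest ih =>
    intro hu
    have hw : w ∉ U := by
      intro hw
      rcases h1 with ⟨a, ha, hta, hha⟩ | hab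
      · exact hu (hta ▸ hNoIn a ha (hha ▸ hw))
      · exact hu ((hAB _ hab).2 hw)
    refine Relation.ReflTransGen.head ?_ (ih hw)
    rcases h1 with ⟨a, ha, hta, hha⟩ | hab
    · refine Or.inl ⟨a, ?_, hta, hha⟩
      have hncr : ¬ edgeCrosses src tgt U a.1 :=
        not_cross_of_arc_side (iff_of_false (hta ▸ hu) (hha ▸ hw))
      rw [revCut_not_cross hncr]
      exact ha
    · exact Or.inr hab

lemma reach_revCut_out_mpr (hNoIn : NoIn src tgt χ U) (hAB : ABSame A B U) {u v : V}
    (hv : v ∉ U) (h : reach src tgt A B (revCut src tgt χ U) u v) :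
    u ∉ U → reach src tgt A B χ u v := by
  have hNoOut' := noOut_revCut (src := src) (tgt := tgt) hNoIn
  induction h using Relation.ReflTransGen.head_induction_on with
  | refl => exact fun _ => Relation.ReflTransGen.refl
  | @head u' w h1 hrest ih =>
    intro hu
    have hw : w ∉ U := by
      intro hw
      exact hv (reach_mem_of_noOut hNoOut' hAB hrest hw)
    refine Relation.ReflTransGen.head ?_ (ih hw)
    rcases h1 with ⟨a, ha, hta, hha⟩ | hab
    · refine Or.inl ⟨a, ?_, hta, hha⟩
      have hncr : ¬ edgeCrosses src tgt U a.1 :=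
        not_cross_of_arc_side (iff_of_false (hta ▸ hu) (hha ▸ hw))
      rw [revCut_not_cross hncr] at ha
      exact ha
    · exact Or.inr hab

lemma cross_acyclic (hNoIn : NoIn src tgt χ U) (hAB : ABSame A B U) {e : E} {c : Bool}
    (hcr : edgeCrosses src tgt U e) (hc : χ e = oneWayFour c) :
    ¬ reach src tgt A B χ (arcHead src tgt (e, c)) (arcTail src tgt (e, c)) := by
  obtain ⟨ht, hh⟩ := cross_one_way_dir hNoIn hcr hc
  exact fun hr => hh (reach_mem_of_noIn hNoIn hAB hr ht)

lemma cross_acyclic_out {χ' : E → Four} (hNoOut : NoOut src tgt χ' U) (hAB : ABSame A B U)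
    {e : E} {c : Bool} (hcr : edgeCrosses src tgt U e) (hc : χ' e = oneWayFour c) :
    ¬ reach src tgt A B χ' (arcHead src tgt (e, c)) (arcTail src tgt (e, c)) := by
  have hdir : arcTail src tgt (e, c) ∉ U ∧ arcHead src tgt (e, c) ∈ U := by
    rcases cross_cases (src := src) (tgt := tgt) hcr c with ⟨h1, h2⟩ | h
    · exact absurd (hNoOut (e, c) (by rw [hc]; exact allows_oneWayFour.2 rfl) h1) h2
    · exact h
  exact fun hr => hdir.1 (reach_mem_of_noOut hNoOut hAB hr hdir.2)

lemma cycE_revCut (hNoIn : NoIn src tgt χ U) (hAB : ABSame A B U) (e : E) :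
    cycE src tgt A B χ e ↔ cycE src tgt A B (revCut src tgt χ U) e := by
  by_cases hcr : edgeCrosses src tgt U e
  · rcases four_cases (χ e) with hc | hc | ⟨c, hc⟩
    · refine iff_of_false (not_cycE_of_solid (Or.inl hc)) (not_cycE_of_solid (Or.inl ?_))
      rw [revCut_cross hcr, hc]
      rfl
    · exact absurd hc (no_two_of_cross hNoIn hcr)
    · refine iff_of_false ?_ ?_
      · rintro ⟨b, hb, hr⟩
        rw [hc] at hb
        obtain rfl := oneWayFour_inj hb.symm  -- b = c? hb : oneWayFour c = oneWayFour b
        exact cross_acyclic hNoIn hAB hcr hc hr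
      · rintro ⟨b, hb, hr⟩
        exact cross_acyclic_out (noOut_revCut hNoIn) hAB hcr hb hr
  · have heq : revCut src tgt χ U e = χ e := revCut_not_cross hcr
    unfold cycE
    rw [heq]
    have hside : src e ∈ U ↔ tgt e ∈ U := not_cross_iff.1 hcr
    constructor
    · rintro ⟨b, hb, hr⟩
      refine ⟨b, hb, ?_⟩
      have hsideb := arc_side_iff (a := (e, b)) hside
      by_cases hhd : arcHead src tgt (e, b) ∈ U
      · exact reach_revCut_in_mp hNoIn hAB hr (hsideb.2 hhd)
      · exact reach_revCut_out_mp hNoIn hAB hr hhd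
    · rintro ⟨b, hb, hr⟩
      refine ⟨b, hb, ?_⟩
      have hsideb := arc_side_iff (a := (e, b)) hside
      by_cases hhd : arcHead src tgt (e, b) ∈ U
      · exact reach_revCut_in_mpr hNoIn hAB hr hhd
      · exact reach_revCut_out_mpr hNoIn hAB (fun h => hhd (hsideb.1 h)) hr hhd

end Stmt16Cut

section Stmt16Inv

set_option linter.unusedSectionVars false

open Relation

variable {V E : Type*} [DecidableEq E] {src tgt : E → V} {A B : Set (V × V)}

lemma list_sum_map_const_mul {α : Type*} (l : List α) (c : ℤ) (f : α → ℤ) :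
    (l.map (fun a => c * f a)).sum = c * (l.map f).sum := by
  induction l with
  | nil => simp
  | cons a l ih => simp only [List.map_cons, List.sum_cons, ih]; ring

lemma cocycleCut_noIn {χ : E → Four} {U : Set V}
    (h : IsABCocycleCut src tgt A B χ U) : NoIn src tgt χ U := by
  intro a ha hha
  by_contra hta
  exact h.2.1 a ha ⟨hta, hha⟩

lemma typ_ccStep {χ χ' : E → Four} (h : CCStep src tgt A B χ χ') (e : E) :
    typFour (χ' e) = typFour (χ e) := by
  rcases h with ⟨l, _, _, rfl⟩ | ⟨U, _, rfl⟩
  · by_cases hm : (e, true) ∈ l ∨ (e, false) ∈ l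
    · rw [revCyc_mem hm, typFour_flip]
    · rw [revCyc_not_mem hm]
  · by_cases hcr : edgeCrosses src tgt U e
    · rw [revCut_cross hcr, typFour_flip]
    · rw [revCut_not_cross hcr]

lemma cycE_ccStep {χ χ' : E → Four} (h : CCStep src tgt A B χ χ') (e : E) :
    cycE src tgt A B χ e ↔ cycE src tgt A B χ' e := by
  rcases h with ⟨l, hc, hall, rfl⟩ | ⟨U, hcut, rfl⟩
  · obtain ⟨v, hne, hw⟩ := cycle_closed_walk hc hall
    exact cycE_revCyc hw e
  · exact cycE_revCut (cocycleCut_noIn hcut) hcut.2.2 e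

lemma typ_rtg {φ χ : E → Four} (h : Relation.ReflTransGen (CCStep src tgt A B) φ χ) (e : E) :
    typFour (χ e) = typFour (φ e) := by
  induction h with
  | refl => rfl
  | tail h1 h2 ih => rw [typ_ccStep h2 e, ih]

lemma cycE_rtg {φ χ : E → Four} (h : Relation.ReflTransGen (CCStep src tgt A B) φ χ) (e : E) :
    cycE src tgt A B φ e ↔ cycE src tgt A B χ e := by
  induction h with
  | refl => rfl
  | tail h1 h2 ih => rw [ih, cycE_ccStep h2 e]

open Classical in
noncomputable def cutInd (U : Set V) (v : V) : ℤ := if v ∈ U then 1 else 0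

noncomputable def outSign (src tgt : E → V) (U : Set V) (χ : E → Four) (e : E) : ℤ :=
  match χ e with
  | Four.forward => cutInd U (src e) - cutInd U (tgt e)
  | Four.backward => cutInd U (tgt e) - cutInd U (src e)
  | _ => 0

open Classical in
noncomputable def gcyc (src tgt : E → V) (A B : Set (V × V)) (U : Set V)
    (χ : E → Four) (e : E) : ℤ :=
  if cycE src tgt A B χ e then outSign src tgt U χ e else 0

noncomputable def Fcyc (src tgt : E → V) (A B : Set (V × V)) [Fintype E] (U : Set V)
    (χ : E → Four) : ℤ :=
  ∑ e, gcyc src tgt A B U χ e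

noncomputable def del (src tgt : E → V) (U : Set V) (a : E × Bool) : ℤ :=
  cutInd U (arcHead src tgt a) - cutInd U (arcTail src tgt a)

lemma del_flip {U : Set V} (e : E) (c : Bool) :
    del src tgt U (e, !c) = - del src tgt U (e, c) := by
  unfold del
  rw [show ((e, !c) : E × Bool) = flipArc (e, c) from rfl, arcHead_flipArc, arcTail_flipArc]
  ring

lemma outSign_oneWay {χ : E → Four} {U : Set V} {e : E} {c : Bool}
    (hc : χ e = oneWayFour c) :
    outSign src tgt U χ e = cutInd U (arcTail src tgt (e, c)) - cutInd U (arcHead src tgt (e, c)) := by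
  unfold outSign
  cases c <;> rw [hc] <;> rfl

lemma outSign_oneWay' {χ : E → Four} {U : Set V} {e : E} {c : Bool}
    (hc : χ e = oneWayFour c) : outSign src tgt U χ e = - del src tgt U (e, c) := by
  rw [outSign_oneWay hc, del]
  ring

lemma outSign_solid {χ : E → Four} {U : Set V} {e : E}
    (hc : χ e = Four.zero ∨ χ e = Four.two) : outSign src tgt U χ e = 0 := by
  unfold outSign
  rcases hc with hc | hc <;> rw [hc]

lemma cutInd_eq_of_not_cross {U : Set V} {e : E} (h : ¬ edgeCrosses src tgt U e) (b : Bool) :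
    del src tgt U (e, b) = 0 := by
  have hside := arc_side_iff (a := (e, b)) (not_cross_iff.1 h)
  unfold del cutInd
  by_cases hh : arcHead src tgt (e, b) ∈ U
  · rw [if_pos hh, if_pos (hside.2 hh)]
    ring
  · rw [if_neg hh, if_neg (fun ht => hh (hside.1 ht))]
    ring

lemma outSign_not_cross {χ : E → Four} {U : Set V} {e : E}
    (h : ¬ edgeCrosses src tgt U e) : outSign src tgt U χ e = 0 := by
  rcases four_cases (χ e) with hc | hc | ⟨c, hc⟩
  · exact outSign_solid (Or.inl hc)
  · exact outSign_solid (Or.inr hc)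
  · rw [outSign_oneWay' hc, cutInd_eq_of_not_cross h, neg_zero]

/-- The direction of a one-way edge. -/
def dirOf (χ : E → Four) (e : E) : Bool := χ e = Four.forward

lemma dirOf_eq {χ : E → Four} {e : E} {c : Bool} (hc : χ e = oneWayFour c) :
    dirOf χ e = c := by
  cases c <;> simp [dirOf, hc, oneWayFour]

lemma gcyc_eq_of_same {χ χ' : E → Four} {U : Set V} {e : E}
    (hval : χ' e = χ e) (hcyc : cycE src tgt A B χ e ↔ cycE src tgt A B χ' e) :
    gcyc src tgt A B U χ' e = gcyc src tgt A B U χ e := by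
  unfold gcyc outSign
  rw [hval]
  by_cases h : cycE src tgt A B χ e
  · rw [if_pos h, if_pos (hcyc.1 h)]
  · rw [if_neg h, if_neg (fun h' => h (hcyc.2 h'))]

lemma Fcyc_cocycleStep [Fintype E] {χ : E → Four} {U U' : Set V}
    (hcut : IsABCocycleCut src tgt A B χ U') :
    Fcyc src tgt A B U (revCut src tgt χ U') = Fcyc src tgt A B U χ := by
  have hNoIn := cocycleCut_noIn hcut
  have hAB := hcut.2.2
  unfold Fcyc
  refine Finset.sum_congr rfl ?_
  intro e _
  by_cases hcr : edgeCrosses src tgt U' e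
  · rcases four_cases (χ e) with hc | hc | ⟨c, hc⟩
    · have hval : revCut src tgt χ U' e = χ e := by rw [revCut_cross hcr, hc]; rfl
      exact gcyc_eq_of_same hval (cycE_revCut hNoIn hAB e)
    · exact absurd hc (no_two_of_cross hNoIn hcr)
    · have h1 : ¬ cycE src tgt A B χ e := by
        rintro ⟨b, hb, hr⟩
        rw [hc] at hb
        obtain rfl := oneWayFour_inj hb.symm
        exact cross_acyclic hNoIn hAB hcr hc hr
      have h2 : ¬ cycE src tgt A B (revCut src tgt χ U') e := by
        rintro ⟨b, hb, hr⟩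
        exact cross_acyclic_out (noOut_revCut hNoIn) hAB hcr hb hr
      unfold gcyc
      rw [if_neg h1, if_neg h2]
  · exact gcyc_eq_of_same (revCut_not_cross hcr) (cycE_revCut hNoIn hAB e)

lemma Fcyc_cycleStep [Fintype E] {χ : E → Four} {U : Set V} {l : List (E × Bool)}
    (hc : IsDirCycle src tgt l) (hall : ∀ a ∈ l, allows (χ a.1) a.2)
    (hNoTwoCross : ∀ e, edgeCrosses src tgt U e → χ e ≠ Four.two) :
    Fcyc src tgt A B U (revCyc χ l) = Fcyc src tgt A B U χ := by
  classical
  obtain ⟨v, hne, hw⟩ := cycle_closed_walk hc hall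
  have hlnd : l.Nodup := List.Nodup.of_map _ (hc.choose_spec.2.2)
  set χ' := revCyc χ l with hχ'
  have hcyciff : ∀ e, cycE src tgt A B χ e ↔ cycE src tgt A B χ' e := cycE_revCyc hw
  have key : ∑ e, (gcyc src tgt A B U χ' e - gcyc src tgt A B U χ e) = 0 := by
    have hsub : ∑ e ∈ Finset.univ.filter
        (fun e => ((e, true) ∈ l ∨ (e, false) ∈ l) ∧ edgeCrosses src tgt U e),
        (gcyc src tgt A B U χ' e - gcyc src tgt A B U χ e)
        = ∑ e, (gcyc src tgt A B U χ' e - gcyc src tgt A B U χ e) := by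
      refine Finset.sum_subset (Finset.filter_subset _ _) ?_
      intro e _ he
      rw [Finset.mem_filter] at he
      push_neg at he
      by_cases hm : (e, true) ∈ l ∨ (e, false) ∈ l
      · have hncr := he (Finset.mem_univ e) hm
        unfold gcyc
        rw [outSign_not_cross (χ := χ') hncr, outSign_not_cross (χ := χ) hncr,
          ite_self, ite_self]
        ring
      · rw [gcyc_eq_of_same (revCyc_not_mem hm) (hcyciff e)]
        ring
    rw [← hsub]
    have hmain : ∑ e ∈ Finset.univ.filter
        (fun e => ((e, true) ∈ l ∨ (e, false) ∈ l) ∧ edgeCrosses src tgt U e),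
        (gcyc src tgt A B U χ' e - gcyc src tgt A B U χ e)
        = ∑ a ∈ l.toFinset.filter (fun a => edgeCrosses src tgt U a.1),
            (2 * del src tgt U a) := by
      refine Finset.sum_nbij' (fun e => (e, dirOf χ e)) (fun a => a.1) ?_ ?_ ?_ ?_ ?_
      · intro e he
        rw [Finset.mem_filter] at he ⊢
        obtain ⟨-, hm, hcr⟩ := he
        have hnt := hNoTwoCross e hcr
        rcases four_cases (χ e) with hc0 | hc0 | ⟨c, hc0⟩
        · exfalso
          rcases hm with h1 | h1 <;>
            · have := hall _ h1
              rw [hc0] at this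
              exact this
        · exact absurd hc0 hnt
        · have hmemc : (e, c) ∈ l := by
            rcases hm with h1 | h1
            · rwa [mem_dir (fun a ha => hall a ha) h1 hc0] at h1
            · rwa [mem_dir (fun a ha => hall a ha) h1 hc0] at h1
          dsimp only
          rw [dirOf_eq hc0]
          exact ⟨List.mem_toFinset.2 hmemc, hcr⟩
      · intro a ha
        rw [Finset.mem_filter] at ha ⊢
        obtain ⟨hm, hcr⟩ := ha
        exact ⟨Finset.mem_univ _, mem_or_of_mem (List.mem_toFinset.1 hm), hcr⟩
      · intro e _
        rfl
      · intro a ha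
        rw [Finset.mem_filter] at ha
        obtain ⟨hm, hcr⟩ := ha
        have hmem := List.mem_toFinset.1 hm
        have := hall _ hmem
        rcases four_cases (χ a.1) with hc0 | hc0 | ⟨c, hc0⟩
        · exfalso; rw [hc0] at this; exact this
        · exact absurd hc0 (hNoTwoCross _ hcr)
        · have hb : a.2 = c := by
            rw [hc0] at this
            exact allows_oneWayFour.1 this
          rw [dirOf_eq hc0, ← hb]
      · intro e he
        rw [Finset.mem_filter] at he
        obtain ⟨-, hm, hcr⟩ := he
        have hnt := hNoTwoCross e hcr
        rcases four_cases (χ e) with hc0 | hc0 | ⟨c, hc0⟩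
        · exfalso
          rcases hm with h1 | h1 <;>
            · have := hall _ h1
              rw [hc0] at this
              exact this
        · exact absurd hc0 hnt
        · have hmemc : (e, c) ∈ l := by
            rcases hm with h1 | h1
            · rwa [mem_dir (fun a ha => hall a ha) h1 hc0] at h1
            · rwa [mem_dir (fun a ha => hall a ha) h1 hc0] at h1
          have hcycE : cycE src tgt A B χ e :=
            ⟨c, hc0, closed_walk_reach (A := A) (B := B) hw _ hmemc⟩
          have hc0' : χ' e = oneWayFour (!c) := by
            rw [hχ', revCyc_mem hm, hc0, flip_oneWayFour]
          unfold gcyc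
          rw [if_pos ((hcyciff e).1 hcycE), if_pos hcycE,
            outSign_oneWay' hc0', outSign_oneWay' hc0, dirOf_eq hc0, del_flip]
          ring
    rw [hmain]
    have hext : ∑ a ∈ l.toFinset.filter (fun a => edgeCrosses src tgt U a.1),
        (2 * del src tgt U a) = ∑ a ∈ l.toFinset, (2 * del src tgt U a) := by
      refine Finset.sum_subset (Finset.filter_subset _ _) ?_
      intro a ha hna
      rw [Finset.mem_filter] at hna
      push_neg at hna
      have hncr := hna ha
      rw [show a = (a.1, a.2) from rfl, cutInd_eq_of_not_cross hncr]
      ring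
    rw [hext, List.sum_toFinset _ hlnd, list_sum_map_const_mul]
    have := awalk_sum_telescope (cutInd U) hw
    unfold del
    rw [this]
    ring
  rw [Finset.sum_sub_distrib] at key
  unfold Fcyc
  linarith

end Stmt16Inv

section Stmt16GoodCycle

set_option linter.unusedSectionVars false

open Relation

variable {V E : Type*} [DecidableEq E] {src tgt : E → V} {A B : Set (V × V)}

lemma cutInd_pos {U : Set V} {v : V} (h : v ∈ U) : cutInd U v = 1 := if_pos h
lemma cutInd_neg {U : Set V} {v : V} (h : v ∉ U) : cutInd U v = 0 := if_neg h

lemma Fcyc_rtg [Fintype E] {φ χ : E → Four} {U : Set V}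
    (h : Relation.ReflTransGen (CCStep src tgt A B) φ χ)
    (hNoTwoCross : ∀ e, edgeCrosses src tgt U e → typFour (φ e) ≠ 2) :
    Fcyc src tgt A B U χ = Fcyc src tgt A B U φ := by
  induction h with
  | refl => rfl
  | tail h1 h2 ih =>
    rw [← ih]
    rcases h2 with ⟨l, hc, hall, rfl⟩ | ⟨U', hcut, rfl⟩
    · refine Fcyc_cycleStep hc hall ?_
      intro e hcr h2
      exact hNoTwoCross e hcr (by rw [← typ_rtg h1 e, h2]; rfl)
    · exact Fcyc_cocycleStep hcut

lemma build_cycle {P : E × Bool → Prop} {l : List (E × Bool)} {x0 y0 : V} {a0 : E × Bool}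
    (hw : AWalk (arcTail src tgt) (arcHead src tgt) P l y0 x0)
    (hnd : (y0 :: l.map (arcHead src tgt)).Nodup)
    (hta : arcTail src tgt a0 = x0) (hha : arcHead src tgt a0 = y0) :
    IsDirCycle src tgt (a0 :: l) := by
  have htails := awalk_tails_concat hw
  refine ⟨by simp, ?_, ?_, ?_⟩
  · refine List.isChain_cons.2 ⟨?_, awalk_chain' hw⟩
    intro b hb
    cases l with
    | nil => simp at hb
    | cons c l' =>
      have hb' : c = b := by simpa using hb
      obtain ⟨-, htc, -⟩ := hw
      rw [hha, ← hb', htc]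
  · cases l with
    | nil =>
      obtain rfl : y0 = x0 := hw
      show arcHead src tgt a0 = arcTail src tgt a0
      rw [hha, hta]
    | cons c l' =>
      have h1 : (a0 :: c :: l').getLast (by simp) = (c :: l').getLast (by simp) :=
        List.getLast_cons _
      rw [h1, awalk_getLast hw (by simp)]
      show x0 = arcTail src tgt a0
      rw [hta]
  · rw [List.map_cons, hta]
    have hnd' : (l.map (arcTail src tgt) ++ [x0]).Nodup := htails ▸ hnd
    obtain ⟨h1, h2, h3⟩ := List.nodup_append.1 hnd'
    exact List.nodup_cons.2 ⟨fun hmem => h3 _ hmem _ (by simp) rfl, h1⟩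

lemma exists_good_cycle [Fintype E] {φ ψ : E → Four}
    (hist : Relation.ReflTransGen (CCStep src tgt A B) φ ψ)
    {e0 : E} {b0 : Bool} (hc0 : ψ e0 = oneWayFour b0) (hdis : ψ e0 ≠ φ e0)
    (hcyc : cycE src tgt A B ψ e0) :
    ∃ l, IsDirCycle src tgt l ∧ (∀ a ∈ l, allows (ψ a.1) a.2) ∧
      (∀ a ∈ l, ψ a.1 = Four.two ∨ ψ a.1 ≠ φ a.1) ∧ (e0, b0) ∈ l := by
  classical
  set Hpred : E × Bool → Prop :=
    fun a => allows (ψ a.1) a.2 ∧ (ψ a.1 = Four.two ∨ ψ a.1 ≠ φ a.1) with hHpred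
  set Hstep : V → V → Prop :=
    fun u w => ∃ a, Hpred a ∧ arcTail src tgt a = u ∧ arcHead src tgt a = w with hHstep
  set x0 := arcTail src tgt (e0, b0) with hx0def
  set y0 := arcHead src tgt (e0, b0) with hy0def
  have ha0P : Hpred (e0, b0) := ⟨by rw [hc0]; exact allows_oneWayFour.2 rfl, Or.inr hdis⟩
  have hreach : Relation.ReflTransGen Hstep y0 x0 := by
    by_contra hny
    set V1 : Set V := {v | Relation.ReflTransGen Hstep v x0} with hV1
    have hx0 : x0 ∈ V1 := Relation.ReflTransGen.refl
    have hy0 : y0 ∉ V1 := hny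
    have hclosed : ∀ u w, Hstep u w → w ∈ V1 → u ∈ V1 :=
      fun u w h hw => Relation.ReflTransGen.head h hw
    have hNoTwoCross : ∀ e, edgeCrosses src tgt V1 e → ψ e ≠ Four.two := by
      intro e hcr h2
      have harc : ∀ b : Bool, Hstep (arcTail src tgt (e, b)) (arcHead src tgt (e, b)) :=
        fun b => ⟨(e, b), ⟨by rw [h2]; trivial, Or.inl h2⟩, rfl, rfl⟩
      rcases hcr with ⟨h1, h2'⟩ | ⟨h1, h2'⟩
      · exact h2' (hclosed _ _ (harc false) h1)
      · exact h2' (hclosed _ _ (harc true) h1)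
    have hdirD : ∀ e c, edgeCrosses src tgt V1 e → ψ e = oneWayFour c → ψ e ≠ φ e →
        arcTail src tgt (e, c) ∈ V1 ∧ arcHead src tgt (e, c) ∉ V1 := by
      intro e c hcr hc hne
      have harc : Hstep (arcTail src tgt (e, c)) (arcHead src tgt (e, c)) :=
        ⟨(e, c), ⟨by rw [hc]; exact allows_oneWayFour.2 rfl, Or.inr hne⟩, rfl, rfl⟩
      rcases cross_cases (src := src) (tgt := tgt) hcr c with h | ⟨h1, h2⟩
      · exact h
      · exact absurd (hclosed _ _ harc h2) h1
    -- termwise comparison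
    have hterm : ∀ e, gcyc src tgt A B V1 φ e ≤ gcyc src tgt A B V1 ψ e := by
      intro e
      by_cases hcy : cycE src tgt A B ψ e
      · have hcyφ : cycE src tgt A B φ e := (cycE_rtg hist e).2 hcy
        unfold gcyc
        rw [if_pos hcy, if_pos hcyφ]
        by_cases heq : ψ e = φ e
        · unfold outSign
          rw [heq]
        · by_cases hcr : edgeCrosses src tgt V1 e
          · obtain ⟨c, hψc, hφc⟩ := disagree_flip (by rw [typ_rtg hist e]) heq
            obtain ⟨ht, hh⟩ := hdirD e c hcr hψc heq
            rw [outSign_oneWay hψc, outSign_oneWay hφc,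
              show arcTail src tgt (e, !c) = arcHead src tgt (e, c) from arcTail_flipArc (e, c),
              show arcHead src tgt (e, !c) = arcTail src tgt (e, c) from arcHead_flipArc (e, c),
              cutInd_pos ht, cutInd_neg hh]
            norm_num
          · rw [outSign_not_cross hcr, outSign_not_cross hcr]
      · have hcyφ : ¬ cycE src tgt A B φ e := fun h => hcy ((cycE_rtg hist e).1 h)
        unfold gcyc
        rw [if_neg hcy, if_neg hcyφ]
    have hstrict : gcyc src tgt A B V1 φ e0 < gcyc src tgt A B V1 ψ e0 := by
      have hcyφ : cycE src tgt A B φ e0 := (cycE_rtg hist e0).2 hcyc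
      have hcr : edgeCrosses src tgt V1 e0 := by
        have hx' : arcTail src tgt (e0, b0) ∈ V1 := by rw [← hx0def]; exact hx0
        have hy' : arcHead src tgt (e0, b0) ∉ V1 := by rw [← hy0def]; exact hy0
        cases b0
        · exact Or.inr ⟨hx', hy'⟩
        · exact Or.inl ⟨hx', hy'⟩
      have heq : ψ e0 ≠ φ e0 := hdis
      obtain ⟨c, hψc, hφc⟩ := disagree_flip (by rw [typ_rtg hist e0]) heq
      have hcc : c = b0 := by
        rw [hc0] at hψc
        exact (oneWayFour_inj hψc).symm
      subst hcc
      obtain ⟨ht, hh⟩ := hdirD e0 c hcr hψc heq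
      unfold gcyc
      rw [if_pos hcyc, if_pos hcyφ, outSign_oneWay hψc, outSign_oneWay hφc,
        show arcTail src tgt (e0, !c) = arcHead src tgt (e0, c) from arcTail_flipArc (e0, c),
        show arcHead src tgt (e0, !c) = arcTail src tgt (e0, c) from arcHead_flipArc (e0, c),
        cutInd_pos ht, cutInd_neg hh]
      norm_num
    have hlt : Fcyc src tgt A B V1 φ < Fcyc src tgt A B V1 ψ := by
      unfold Fcyc
      exact Finset.sum_lt_sum (fun e _ => hterm e) ⟨e0, Finset.mem_univ _, hstrict⟩
    have heqF : Fcyc src tgt A B V1 ψ = Fcyc src tgt A B V1 φ := by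
      refine Fcyc_rtg hist ?_
      intro e hcr
      rw [← typ_rtg hist e]
      intro h2
      exact hNoTwoCross e hcr (typ_eq_two_iff.1 h2)
    rw [heqF] at hlt
    exact lt_irrefl _ hlt
  -- build the cycle
  obtain ⟨l0, hl0⟩ := awalk_of_rtg (tl := arcTail src tgt) (hd := arcHead src tgt)
    (P := Hpred) (fun u w h => h) hreach
  obtain ⟨l', hl', hsub, hnd⟩ := awalk_shorten hl0
  refine ⟨(e0, b0) :: l', build_cycle hl' hnd rfl rfl, ?_, ?_, by simp⟩
  · intro a ha
    rcases List.mem_cons.1 ha with rfl | ha'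
    · exact ha0P.1
    · exact (awalk_mem hl' ha').1
  · intro a ha
    rcases List.mem_cons.1 ha with rfl | ha'
    · exact ha0P.2
    · exact (awalk_mem hl' ha').2

end Stmt16GoodCycle

section Stmt16GoodCocycle

set_option linter.unusedSectionVars false

open Relation
open scoped Classical

variable {V E : Type*} [DecidableEq E] {src tgt : E → V} {A B : Set (V × V)}

lemma oneWayFour_ne_zero (b : Bool) : oneWayFour b ≠ Four.zero := by
  cases b <;> simp [oneWayFour]

lemma oneWayFour_ne_two (b : Bool) : oneWayFour b ≠ Four.two := by
  cases b <;> simp [oneWayFour]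

lemma oneWay_ne (c : Bool) : oneWayFour (!c) ≠ oneWayFour c := by
  cases c <;> simp [oneWayFour]

lemma isOneWay_exists {c : Four} (h : IsOneWay c) : ∃ b, c = oneWayFour b := by
  rcases h with h | h
  · exact ⟨true, h⟩
  · exact ⟨false, h⟩

lemma awalk_weaken {α : Type*} {tl hd : α → V} {P Q : α → Prop} {l : List α} {x y : V}
    (h : AWalk tl hd P l x y) (hPQ : ∀ a, P a → Q a) : AWalk tl hd Q l x y := by
  induction l generalizing x with
  | nil => exact h
  | cons a l ih =>
    obtain ⟨hp, hta, hw⟩ := h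
    exact ⟨hPQ a hp, hta, ih hw⟩

def tl2 (src tgt : E → V) : (E × Bool) ⊕ (V × V) → V := Sum.elim (arcTail src tgt) Prod.fst
def hd2 (src tgt : E → V) : (E × Bool) ⊕ (V × V) → V := Sum.elim (arcHead src tgt) Prod.snd

open Classical in
noncomputable def stepVal (src tgt : E → V) (A B : Set (V × V)) (χ : E → Four) :
    (E × Bool) ⊕ (V × V) → ℤ :=
  Sum.elim
    (fun a =>
      if IsOneWay (χ a.1) ∧ ¬ cycE src tgt A B χ a.1 then
        (if χ a.1 = oneWayFour a.2 then 1 else -1)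
      else 0)
    (fun _ => 0)

lemma stepVal_inl {χ : E → Four} (e : E) (b : Bool) :
    stepVal src tgt A B χ (Sum.inl (e, b)) =
      if IsOneWay (χ e) ∧ ¬ cycE src tgt A B χ e then
        (if χ e = oneWayFour b then 1 else -1)
      else 0 := rfl

lemma stepVal_inr {χ : E → Four} (p : V × V) : stepVal src tgt A B χ (Sum.inr p) = 0 := rfl

lemma stepVal_eq_one {χ : E → Four} {e : E} {b : Bool}
    (hacy : ¬ cycE src tgt A B χ e) (heq : χ e = oneWayFour b) :
    stepVal src tgt A B χ (Sum.inl (e, b)) = 1 := by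
  rw [stepVal_inl, if_pos ⟨heq ▸ oneWay_oneWayFour b, hacy⟩, if_pos heq]

lemma stepVal_eq_neg_one {χ : E → Four} {e : E} {b : Bool} (hone : IsOneWay (χ e))
    (hacy : ¬ cycE src tgt A B χ e) (hne : χ e ≠ oneWayFour b) :
    stepVal src tgt A B χ (Sum.inl (e, b)) = -1 := by
  rw [stepVal_inl, if_pos ⟨hone, hacy⟩, if_neg hne]

lemma stepVal_eq_zero_of_cyc {χ : E → Four} {e : E} (b : Bool)
    (h : cycE src tgt A B χ e) : stepVal src tgt A B χ (Sum.inl (e, b)) = 0 := by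
  rw [stepVal_inl, if_neg (show ¬(IsOneWay (χ e) ∧ ¬ cycE src tgt A B χ e) from
    fun hh => hh.2 h)]

lemma stepVal_eq_zero_of_not_oneWay {χ : E → Four} {e : E} (b : Bool)
    (h : ¬ IsOneWay (χ e)) : stepVal src tgt A B χ (Sum.inl (e, b)) = 0 := by
  rw [stepVal_inl, if_neg (show ¬(IsOneWay (χ e) ∧ ¬ cycE src tgt A B χ e) from
    fun hh => h hh.1)]

noncomputable def FW (src tgt : E → V) (A B : Set (V × V)) (χ : E → Four)
    (W : List ((E × Bool) ⊕ (V × V))) : ℤ :=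
  (W.map (stepVal src tgt A B χ)).sum

noncomputable def del2 (src tgt : E → V) (U : Set V) (s : (E × Bool) ⊕ (V × V)) : ℤ :=
  cutInd U (hd2 src tgt s) - cutInd U (tl2 src tgt s)

lemma stepVal_congr {χ χ' : E → Four} {e : E} (hval : χ' e = χ e)
    (hcyc : cycE src tgt A B χ e ↔ cycE src tgt A B χ' e) (b : Bool) :
    stepVal src tgt A B χ' (Sum.inl (e, b)) = stepVal src tgt A B χ (Sum.inl (e, b)) := by
  rw [stepVal_inl, stepVal_inl]
  by_cases h : IsOneWay (χ e) ∧ ¬ cycE src tgt A B χ e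
  · rw [if_pos h, if_pos (show IsOneWay (χ' e) ∧ ¬ cycE src tgt A B χ' e from
      ⟨hval.symm ▸ h.1, fun hc => h.2 (hcyc.2 hc)⟩), hval]
  · rw [if_neg h, if_neg (show ¬(IsOneWay (χ' e) ∧ ¬ cycE src tgt A B χ' e) from
      fun h' => h ⟨hval ▸ h'.1, fun hc => h'.2 (hcyc.1 hc)⟩)]

lemma stepVal_revCyc {χ : E → Four} {l : List (E × Bool)} {v : V}
    (hw : AWalk (arcTail src tgt) (arcHead src tgt) (allowArc χ) l v v)
    (s : (E × Bool) ⊕ (V × V)) :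
    stepVal src tgt A B (revCyc χ l) s = stepVal src tgt A B χ s := by
  have hall : ∀ a ∈ l, allowArc χ a := fun a ha => awalk_mem hw ha
  cases s with
  | inr p => rfl
  | inl a =>
    obtain ⟨e, b⟩ := a
    have hcyciff := cycE_revCyc (A := A) (B := B) hw e
    by_cases hm : (e, true) ∈ l ∨ (e, false) ∈ l
    · rcases four_cases (χ e) with hc | hc | ⟨c, hc⟩
      · exact stepVal_congr (by rw [revCyc_mem hm, hc]; rfl) hcyciff b
      · exact stepVal_congr (by rw [revCyc_mem hm, hc]; rfl) hcyciff b
      · have hmemc : (e, c) ∈ l := by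
          rcases hm with h1 | h1
          · rwa [mem_dir hall h1 hc] at h1
          · rwa [mem_dir hall h1 hc] at h1
        have hcycE : cycE src tgt A B χ e :=
          ⟨c, hc, closed_walk_reach (A := A) (B := B) hw _ hmemc⟩
        rw [stepVal_eq_zero_of_cyc b (hcyciff.1 hcycE), stepVal_eq_zero_of_cyc b hcycE]
    · exact stepVal_congr (revCyc_not_mem hm) hcyciff b

lemma FW_cycleStep {χ : E → Four} {l : List (E × Bool)} {v : V}
    (hw : AWalk (arcTail src tgt) (arcHead src tgt) (allowArc χ) l v v)
    (W : List ((E × Bool) ⊕ (V × V))) :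
    FW src tgt A B (revCyc χ l) W = FW src tgt A B χ W := by
  unfold FW
  rw [funext (stepVal_revCyc hw)]

lemma del2_inr {U : Set V} (hAB : ABSame A B U) {p : V × V}
    (hp : p ∈ A ∪ B ∨ (p.2, p.1) ∈ A ∪ B) : del2 src tgt U (Sum.inr p) = 0 := by
  have hiff : p.1 ∈ U ↔ p.2 ∈ U := by
    rcases hp with hp | hp
    · exact hAB p hp
    · exact (hAB _ hp).symm
  unfold del2
  show cutInd U p.2 - cutInd U p.1 = 0
  by_cases h : p.1 ∈ U
  · rw [cutInd_pos (hiff.1 h), cutInd_pos h]; ring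
  · rw [cutInd_neg (fun h2 => h (hiff.2 h2)), cutInd_neg h]; ring

lemma stepVal_sub_revCut_inl {χ : E → Four} {U' : Set V}
    (hcut : IsABCocycleCut src tgt A B χ U') {e : E} {b : Bool} (hz : χ e ≠ Four.zero) :
    stepVal src tgt A B (revCut src tgt χ U') (Sum.inl (e, b)) -
      stepVal src tgt A B χ (Sum.inl (e, b)) = 2 * del2 src tgt U' (Sum.inl (e, b)) := by
  have hNoIn := cocycleCut_noIn hcut
  have hAB := hcut.2.2
  set χ' := revCut src tgt χ U' with hχ'
  by_cases hcr : edgeCrosses src tgt U' e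
  · rcases four_cases (χ e) with hc | hc | ⟨c, hc⟩
    · exact absurd hc hz
    · exact absurd hc (no_two_of_cross hNoIn hcr)
    · have hc' : χ' e = oneWayFour (!c) := by
        rw [hχ', revCut_cross hcr, hc, flip_oneWayFour]
      have h1 : ¬ cycE src tgt A B χ e := by
        rintro ⟨b', hb', hr⟩
        rw [hc] at hb'
        obtain rfl := oneWayFour_inj hb'.symm
        exact cross_acyclic hNoIn hAB hcr hc hr
      have h2 : ¬ cycE src tgt A B χ' e := by
        rintro ⟨b', hb', hr⟩
        exact cross_acyclic_out (noOut_revCut hNoIn) hAB hcr hb' hr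
      obtain ⟨ht, hh⟩ := cross_one_way_dir hNoIn hcr hc
      have hone : IsOneWay (χ e) := hc ▸ oneWay_oneWayFour c
      have hone' : IsOneWay (χ' e) := hc' ▸ oneWay_oneWayFour (!c)
      unfold del2
      by_cases hbc : b = c
      · subst hbc
        rw [stepVal_eq_neg_one hone' h2 (by rw [hc']; exact oneWay_ne b),
          stepVal_eq_one h1 hc]
        show _ = 2 * (cutInd U' (arcHead src tgt (e, b)) - cutInd U' (arcTail src tgt (e, b)))
        rw [cutInd_pos ht, cutInd_neg hh]
        ring
      · have hbc' : b = !c := by cases b <;> cases c <;> simp_all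
        subst hbc'
        rw [stepVal_eq_one h2 hc',
          stepVal_eq_neg_one hone h1 (by rw [hc]; intro h; exact oneWay_ne c h.symm)]
        show _ = 2 * (cutInd U' (arcHead src tgt (e, !c)) - cutInd U' (arcTail src tgt (e, !c)))
        rw [show arcTail src tgt (e, !c) = arcHead src tgt (e, c) from arcTail_flipArc (e, c),
          show arcHead src tgt (e, !c) = arcTail src tgt (e, c) from arcHead_flipArc (e, c),
          cutInd_pos ht, cutInd_neg hh]
        ring
  · have hval : χ' e = χ e := revCut_not_cross hcr
    rw [stepVal_congr hval (cycE_revCut hNoIn hAB e) b]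
    unfold del2
    show _ = 2 * (cutInd U' (arcHead src tgt (e, b)) - cutInd U' (arcTail src tgt (e, b)))
    have := cutInd_eq_of_not_cross (src := src) (tgt := tgt) hcr b
    unfold del at this
    rw [this]
    ring

lemma FW_cocycleStep {χ : E → Four} {U' : Set V}
    (hcut : IsABCocycleCut src tgt A B χ U') {W : List ((E × Bool) ⊕ (V × V))} {v : V}
    (hclosed : AWalk (tl2 src tgt) (hd2 src tgt) (fun _ => True) W v v)
    (hzero : ∀ e b, Sum.inl (e, b) ∈ W → χ e ≠ Four.zero)
    (hABW : ∀ p : V × V, Sum.inr p ∈ W → p ∈ A ∪ B ∨ (p.2, p.1) ∈ A ∪ B) :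
    FW src tgt A B (revCut src tgt χ U') W = FW src tgt A B χ W := by
  have h1 : FW src tgt A B (revCut src tgt χ U') W - FW src tgt A B χ W
      = (W.map (fun s => stepVal src tgt A B (revCut src tgt χ U') s
          - stepVal src tgt A B χ s)).sum := (list_sum_map_sub _ _).symm
  have h2 : (W.map (fun s => stepVal src tgt A B (revCut src tgt χ U') s
      - stepVal src tgt A B χ s)).sum = (W.map (fun s => 2 * del2 src tgt U' s)).sum := by
    congr 1
    refine List.map_congr_left ?_
    intro s hs
    cases s with
    | inl a =>
      obtain ⟨e, b⟩ := a
      exact stepVal_sub_revCut_inl hcut (hzero e b hs)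
    | inr p =>
      rw [stepVal_inr, stepVal_inr, del2_inr hcut.2.2 (hABW p hs)]
      ring
  have h3 : (W.map (fun s => 2 * del2 src tgt U' s)).sum = 0 := by
    rw [list_sum_map_const_mul]
    have := awalk_sum_telescope (cutInd U') hclosed
    unfold del2
    rw [this]
    ring
  rw [h2, h3] at h1
  linarith

lemma FW_rtg {φ χ : E → Four} {W : List ((E × Bool) ⊕ (V × V))} {v : V}
    (h : Relation.ReflTransGen (CCStep src tgt A B) φ χ)
    (hclosed : AWalk (tl2 src tgt) (hd2 src tgt) (fun _ => True) W v v)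
    (hzero : ∀ e b, Sum.inl (e, b) ∈ W → typFour (φ e) ≠ 0)
    (hABW : ∀ p : V × V, Sum.inr p ∈ W → p ∈ A ∪ B ∨ (p.2, p.1) ∈ A ∪ B) :
    FW src tgt A B χ W = FW src tgt A B φ W := by
  induction h with
  | refl => rfl
  | tail h1 h2 ih =>
    rw [← ih]
    rcases h2 with ⟨l, hc, hall, rfl⟩ | ⟨U', hcut, rfl⟩
    · obtain ⟨w, hne, hw⟩ := cycle_closed_walk hc hall
      exact FW_cycleStep hw W
    · refine FW_cocycleStep hcut hclosed ?_ hABW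
      intro e b hs hz
      exact hzero e b hs (by rw [← typ_rtg h1 e, hz]; rfl)

lemma exists_good_cocycle [Fintype E] {φ ψ : E → Four}
    (hist : Relation.ReflTransGen (CCStep src tgt A B) φ ψ)
    {e0 : E} {b0 : Bool} (hc0 : ψ e0 = oneWayFour b0) (hdis : ψ e0 ≠ φ e0)
    (hacy : ¬ cycE src tgt A B ψ e0) :
    ∃ U : Set V, IsABCocycleCut src tgt A B ψ U ∧
      (∀ e, edgeCrosses src tgt U e → ψ e ≠ Four.two) ∧
      (∀ e, edgeCrosses src tgt U e → IsOneWay (ψ e) → ψ e ≠ φ e) ∧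
      edgeCrosses src tgt U e0 := by
  classical
  set Pq : (E × Bool) ⊕ (V × V) → Prop := fun s =>
    match s with
    | Sum.inl a => ψ a.1 ≠ Four.zero ∧
        (IsOneWay (ψ a.1) → (ψ a.1 = oneWayFour a.2 ∨ ψ a.1 = φ a.1))
    | Sum.inr p => p ∈ A ∪ B ∨ (p.2, p.1) ∈ A ∪ B
    with hPq
  set Qstep : V → V → Prop :=
    fun u w => ∃ s, Pq s ∧ tl2 src tgt s = u ∧ hd2 src tgt s = w with hQstep
  have ha0P : Pq (Sum.inl (e0, b0)) :=
    ⟨by rw [hc0]; exact oneWayFour_ne_zero b0, fun _ => Or.inl hc0⟩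
  set x0 := arcTail src tgt (e0, b0) with hx0def
  set y0 := arcHead src tgt (e0, b0) with hy0def
  set V1 : Set V := {v | Relation.ReflTransGen Qstep v x0} with hV1
  have hx0 : x0 ∈ V1 := Relation.ReflTransGen.refl
  have hclosed : ∀ u w, Qstep u w → w ∈ V1 → u ∈ V1 :=
    fun u w h hw => Relation.ReflTransGen.head h hw
  have harcQ : ∀ a : E × Bool, allows (ψ a.1) a.2 →
      Qstep (arcTail src tgt a) (arcHead src tgt a) := by
    intro a ha
    refine ⟨Sum.inl a, ⟨?_, ?_⟩, rfl, rfl⟩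
    · intro hz
      rw [hz] at ha
      exact ha
    · intro hone
      obtain ⟨c, hcc⟩ := isOneWay_exists hone
      left
      rw [hcc] at ha ⊢
      rw [allows_oneWayFour.1 ha]
  have hy0 : y0 ∉ V1 := by
    intro hy
    obtain ⟨W0, hW0⟩ := awalk_of_rtg (tl := tl2 src tgt) (hd := hd2 src tgt)
      (P := Pq) (fun u w h => h) hy
    set W : List ((E × Bool) ⊕ (V × V)) := W0 ++ [Sum.inl (e0, b0)] with hW
    have hWwalk : AWalk (tl2 src tgt) (hd2 src tgt) Pq W y0 y0 :=
      awalk_append.2 ⟨x0, hW0, ha0P, rfl, rfl⟩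
    have hWT : AWalk (tl2 src tgt) (hd2 src tgt) (fun _ => True) W y0 y0 :=
      awalk_weaken hWwalk (fun _ _ => trivial)
    have hinv : FW src tgt A B ψ W = FW src tgt A B φ W := by
      refine FW_rtg hist hWT ?_ ?_
      · intro e b hs hz
        have := (awalk_mem hWwalk hs).1
        rw [← typ_rtg hist e] at hz
        exact this (typ_eq_zero_iff.1 hz)
      · intro p hs
        exact awalk_mem hWwalk hs
    -- pointwise comparison
    have hterm : ∀ s ∈ W, stepVal src tgt A B φ s ≤ stepVal src tgt A B ψ s := by
      intro s hs
      cases s with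
      | inr p => rw [stepVal_inr, stepVal_inr]
      | inl a =>
        obtain ⟨e, b⟩ := a
        have hPqs := awalk_mem hWwalk hs
        by_cases hone : IsOneWay (ψ e)
        · by_cases hcy : cycE src tgt A B ψ e
          · rw [stepVal_eq_zero_of_cyc b ((cycE_rtg hist e).2 hcy),
              stepVal_eq_zero_of_cyc b hcy]
          · have honeφ : IsOneWay (φ e) := by
              rw [isOneWay_iff_typ] at hone ⊢
              rw [← typ_rtg hist e]
              exact hone
            have hcyφ : ¬ cycE src tgt A B φ e := fun h => hcy ((cycE_rtg hist e).1 h)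
            by_cases heq : ψ e = φ e
            · exact le_of_eq (stepVal_congr (A := A) (B := B) heq.symm
                ((cycE_rtg hist e).symm) b)
            · obtain ⟨c, hψc, hφc⟩ := disagree_flip (by rw [typ_rtg hist e]) heq
              have hbb : ψ e = oneWayFour b := by
                rcases hPqs.2 hone with h | h
                · exact h
                · exact absurd h heq
              obtain rfl := oneWayFour_inj (hψc.symm.trans hbb)
              rw [stepVal_eq_one hcy hbb,
                stepVal_eq_neg_one honeφ hcyφ (by rw [hφc]; exact oneWay_ne c)]
              norm_num
        · have honeφ : ¬ IsOneWay (φ e) := by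
            rw [isOneWay_iff_typ] at hone ⊢
            rw [← typ_rtg hist e]
            exact hone
          rw [stepVal_eq_zero_of_not_oneWay b honeφ, stepVal_eq_zero_of_not_oneWay b hone]
    have hstrict : stepVal src tgt A B φ (Sum.inl (e0, b0)) + 2
        ≤ stepVal src tgt A B ψ (Sum.inl (e0, b0)) := by
      have hone : IsOneWay (ψ e0) := hc0 ▸ oneWay_oneWayFour b0
      have honeφ : IsOneWay (φ e0) := by
        rw [isOneWay_iff_typ] at hone ⊢
        rw [← typ_rtg hist e0]
        exact hone
      have hcyφ : ¬ cycE src tgt A B φ e0 := fun h => hacy ((cycE_rtg hist e0).1 h)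
      obtain ⟨c, hψc, hφc⟩ := disagree_flip (by rw [typ_rtg hist e0]) hdis
      obtain rfl := oneWayFour_inj (hψc.symm.trans hc0)
      rw [stepVal_eq_one hacy hc0,
        stepVal_eq_neg_one honeφ hcyφ (by rw [hφc]; exact oneWay_ne c)]
      norm_num
    have ha0W : Sum.inl (e0, b0) ∈ W := by
      rw [hW]
      simp
    have hsum : (2 : ℤ) ≤ FW src tgt A B ψ W - FW src tgt A B φ W := by
      have hs1 : FW src tgt A B ψ W - FW src tgt A B φ W
          = (W.map (fun s => stepVal src tgt A B ψ s - stepVal src tgt A B φ s)).sum :=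
        (list_sum_map_sub _ _).symm
      rw [hs1]
      have hmemval : (2 : ℤ) ≤ stepVal src tgt A B ψ (Sum.inl (e0, b0))
          - stepVal src tgt A B φ (Sum.inl (e0, b0)) := by linarith [hstrict]
      calc (2 : ℤ) ≤ stepVal src tgt A B ψ (Sum.inl (e0, b0))
          - stepVal src tgt A B φ (Sum.inl (e0, b0)) := hmemval
        _ ≤ (W.map (fun s => stepVal src tgt A B ψ s - stepVal src tgt A B φ s)).sum := by
          refine List.single_le_sum ?_ _ (List.mem_map_of_mem ha0W)
          intro x hx
          obtain ⟨s, hs, rfl⟩ := List.mem_map.1 hx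
          have := hterm s hs
          linarith
    rw [hinv] at hsum
    norm_num at hsum
  -- V1 is the desired cut
  have hsame_of_two : ∀ u w, Qstep u w → Qstep w u → (u ∈ V1 ↔ w ∈ V1) :=
    fun u w h1 h2 => ⟨fun hu => hclosed w u h2 hu, fun hw => hclosed u w h1 hw⟩
  have hNoIn1 : ∀ a : E × Bool, allows (ψ a.1) a.2 →
      ¬(arcTail src tgt a ∉ V1 ∧ arcHead src tgt a ∈ V1) := by
    rintro a ha ⟨hta, hha⟩
    exact hta (hclosed _ _ (harcQ a ha) hha)
  have hABiff : ∀ p ∈ A ∪ B, ((p : V × V).1 ∈ V1 ↔ p.2 ∈ V1) := by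
    intro p hp
    refine hsame_of_two _ _ ⟨Sum.inr p, Or.inl hp, rfl, rfl⟩
      ⟨Sum.inr (p.2, p.1), Or.inr hp, rfl, rfl⟩
  have hcr0 : edgeCrosses src tgt V1 e0 := by
    have hx' : arcTail src tgt (e0, b0) ∈ V1 := by rw [← hx0def]; exact hx0
    have hy' : arcHead src tgt (e0, b0) ∉ V1 := by rw [← hy0def]; exact hy0
    cases b0
    · exact Or.inr ⟨hx', hy'⟩
    · exact Or.inl ⟨hx', hy'⟩
  refine ⟨V1, ⟨⟨(e0, b0), by rw [hc0]; exact allows_oneWayFour.2 rfl, hx0, hy0⟩,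
    hNoIn1, hABiff⟩, ?_, ?_, hcr0⟩
  · intro e hcr h2
    have hq : ∀ b : Bool, Qstep (arcTail src tgt (e, b)) (arcHead src tgt (e, b)) := by
      intro b
      refine harcQ (e, b) ?_
      rw [h2]
      trivial
    have := hsame_of_two _ _ (hq true)
      (by
        have := hq false
        rwa [show arcTail src tgt (e, false) = arcHead src tgt (e, true) from rfl,
          show arcHead src tgt (e, false) = arcTail src tgt (e, true) from rfl] at this)
    exact (not_cross_of_arc_side (a := (e, true)) this) hcr
  · intro e hcr hone heq
    obtain ⟨c, hcc⟩ := isOneWay_exists hone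
    have hq1 : Qstep (arcTail src tgt (e, c)) (arcHead src tgt (e, c)) :=
      harcQ (e, c) (by rw [hcc]; exact allows_oneWayFour.2 rfl)
    have hq2 : Qstep (arcHead src tgt (e, c)) (arcTail src tgt (e, c)) := by
      refine ⟨Sum.inl (e, !c), ⟨by rw [hcc]; exact oneWayFour_ne_zero c, fun _ => Or.inr heq⟩,
        arcTail_flipArc (e, c), arcHead_flipArc (e, c)⟩
    have := hsame_of_two _ _ hq1 hq2
    exact (not_cross_of_arc_side (a := (e, c)) this) hcr

end Stmt16GoodCocycle

section Stmt16Main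

set_option linter.unusedSectionVars false

open Relation
open scoped Classical

variable {V E : Type*} [DecidableEq E] {src tgt : E → V} {A B : Set (V × V)}

lemma cycle_hist_cyclic {φ χ : E → Four}
    (h : Relation.ReflTransGen (CycleStep src tgt) φ χ) :
    ∀ e, χ e ≠ φ e → cycE src tgt A B χ e := by
  induction h with
  | refl => exact fun e he => absurd rfl he
  | @tail χ₁ χ₂ h1 h2 ih =>
    obtain ⟨l, hc, hall, rfl⟩ := h2
    obtain ⟨v, hne, hw⟩ := cycle_closed_walk hc hall
    intro e he
    by_cases hm : (e, true) ∈ l ∨ (e, false) ∈ l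
    · rcases four_cases (χ₁ e) with hc0 | hc0 | ⟨c, hc0⟩
      · have hval : revCyc χ₁ l e = χ₁ e := by rw [revCyc_mem hm, hc0]; rfl
        exact (cycE_revCyc hw e).1 (ih e (by rwa [hval] at he))
      · have hval : revCyc χ₁ l e = χ₁ e := by rw [revCyc_mem hm, hc0]; rfl
        exact (cycE_revCyc hw e).1 (ih e (by rwa [hval] at he))
      · have hmemc : (e, c) ∈ l := by
          rcases hm with h1' | h1'
          · rwa [mem_dir (fun a ha => hall a ha) h1' hc0] at h1'
          · rwa [mem_dir (fun a ha => hall a ha) h1' hc0] at h1'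
        exact (cycE_revCyc hw e).1
          ⟨c, hc0, closed_walk_reach (A := A) (B := B) hw _ hmemc⟩
    · have hval := revCyc_not_mem (χ := χ₁) (l := l) (e := e) hm
      exact (cycE_revCyc hw e).1 (ih e (by rwa [hval] at he))

lemma cocycle_hist_acyclic {φ χ : E → Four}
    (h : Relation.ReflTransGen (CocycleStep src tgt A B) φ χ) :
    ∀ e, χ e ≠ φ e → ¬ cycE src tgt A B χ e := by
  induction h with
  | refl => exact fun e he => absurd rfl he
  | @tail χ₁ χ₂ h1 h2 ih =>
    obtain ⟨U, hcut, rfl⟩ := h2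
    have hNoIn := cocycleCut_noIn hcut
    have hAB := hcut.2.2
    intro e he
    by_cases hcr : edgeCrosses src tgt U e
    · rintro ⟨b, hb, hr⟩
      exact cross_acyclic_out (noOut_revCut hNoIn) hAB hcr hb hr
    · have hval := revCut_not_cross (χ := χ₁) hcr
      intro hcy
      exact ih e (by rwa [hval] at he) ((cycE_revCut hNoIn hAB e).2 hcy)

lemma good_cycle_step [Fintype E] {φ φ' χ : E → Four}
    (hist : Relation.ReflTransGen (CCStep src tgt A B) φ χ)
    (hsub : ∀ e, χ e ≠ φ e → φ' e ≠ φ e)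
    {e1 : E} (hd : χ e1 ≠ φ e1) (hcy : cycE src tgt A B χ e1) :
    ∃ χ₂, RCycleStep src tgt φ φ' χ χ₂ ∧ CycleStep src tgt χ χ₂ ∧
      (∀ e, χ₂ e ≠ φ e → χ e ≠ φ e) ∧ χ₂ e1 = φ e1 := by
  obtain ⟨c, hχc, hφc⟩ := disagree_flip (typ_rtg hist e1) hd
  obtain ⟨l, hcyc, hall, hok, hmem⟩ := exists_good_cycle hist hχc hd hcy
  have hflip : ∀ e, ((e, true) ∈ l ∨ (e, false) ∈ l) → IsOneWay (χ e) → χ e ≠ φ e := by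
    intro e hm hone
    obtain ⟨b, hb⟩ := isOneWay_exists hone
    have hmemb : (e, b) ∈ l := by
      rcases hm with h1 | h1
      · rwa [mem_dir (fun a ha => hall a ha) h1 hb] at h1
      · rwa [mem_dir (fun a ha => hall a ha) h1 hb] at h1
    rcases hok _ hmemb with h2 | h2
    · exfalso
      rw [h2] at hb
      exact oneWayFour_ne_two b hb.symm
    · exact h2
  refine ⟨revCyc χ l, ⟨l, hcyc, hall, ?_, rfl⟩, ⟨l, hcyc, hall, rfl⟩, ?_, ?_⟩
  · -- okCycList
    intro a ha
    rintro ⟨hone, heq⟩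
    rcases hok a ha with h2 | h2
    · rw [isOneWay_iff_typ, ← typ_rtg hist a.1, h2] at hone
      exact absurd hone (by norm_num [typFour])
    · have honeχ : IsOneWay (χ a.1) := by
        rw [isOneWay_iff_typ, typ_rtg hist a.1, ← isOneWay_iff_typ]
        exact hone
      exact hsub a.1 h2 (heq ▸ rfl)
  · -- disagreement only shrinks
    intro e h2
    by_cases hm : (e, true) ∈ l ∨ (e, false) ∈ l
    · rcases four_cases (χ e) with hc0 | hc0 | ⟨b, hc0⟩
      · rw [revCyc_mem hm, hc0] at h2
        rw [hc0]
        exact h2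
      · rw [revCyc_mem hm, hc0] at h2
        rw [hc0]
        exact h2
      · exact hflip e hm (hc0 ▸ oneWay_oneWayFour b)
    · rwa [revCyc_not_mem hm] at h2
  · -- e1 now agrees
    have hmem1 : (e1, true) ∈ l ∨ (e1, false) ∈ l := mem_or_of_mem hmem
    rw [revCyc_mem hmem1, hχc, flip_oneWayFour, hφc]

lemma good_cocycle_step [Fintype E] {φ φ' χ : E → Four}
    (hist : Relation.ReflTransGen (CCStep src tgt A B) φ χ)
    (hsub : ∀ e, χ e ≠ φ e → φ' e ≠ φ e)
    {e1 : E} (hd : χ e1 ≠ φ e1) (hcy : ¬ cycE src tgt A B χ e1) :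
    ∃ χ₂, RCocycleStep src tgt A B φ φ' χ χ₂ ∧ CocycleStep src tgt A B χ χ₂ ∧
      (∀ e, χ₂ e ≠ φ e → χ e ≠ φ e) ∧ χ₂ e1 = φ e1 := by
  obtain ⟨c, hχc, hφc⟩ := disagree_flip (typ_rtg hist e1) hd
  obtain ⟨U, hcut, hnt, hone_dis, hcr1⟩ := exists_good_cocycle hist hχc hd hcy
  refine ⟨revCut src tgt χ U, ⟨U, hcut, ?_, rfl⟩, ⟨U, hcut, rfl⟩, ?_, ?_⟩
  · -- okCut
    intro e hcr
    rintro ⟨hone, heq⟩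
    rcases four_cases (χ e) with hc0 | hc0 | ⟨b, hc0⟩
    · rw [isOneWay_iff_typ, ← typ_rtg hist e, hc0] at hone
      exact absurd hone (by norm_num [typFour])
    · exact hnt e hcr hc0
    · exact hsub e (hone_dis e hcr (hc0 ▸ oneWay_oneWayFour b)) (heq ▸ rfl)
  · -- disagreement only shrinks
    intro e h2
    by_cases hcr : edgeCrosses src tgt U e
    · rcases four_cases (χ e) with hc0 | hc0 | ⟨b, hc0⟩
      · rw [revCut_cross hcr, hc0] at h2
        rw [hc0]
        exact h2
      · exact absurd hc0 (hnt e hcr)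
      · exact hone_dis e hcr (hc0 ▸ oneWay_oneWayFour b)
    · rwa [revCut_not_cross hcr] at h2
  · -- e1 now agrees
    rw [revCut_cross hcr1, hχc, flip_oneWayFour, hφc]

lemma card_step [Fintype E] {φ χ χ₂ : E → Four}
    (hsub : ∀ e, χ₂ e ≠ φ e → χ e ≠ φ e) {e1 : E} (hd : χ e1 ≠ φ e1) (he1 : χ₂ e1 = φ e1) :
    (Finset.univ.filter (fun e => χ₂ e ≠ φ e)).card
      < (Finset.univ.filter (fun e => χ e ≠ φ e)).card := by
  refine Finset.card_lt_card ?_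
  constructor
  · intro e he
    rw [Finset.mem_filter] at he ⊢
    exact ⟨he.1, hsub e he.2⟩
  · intro hsup
    have := hsup (Finset.mem_filter.2 ⟨Finset.mem_univ e1, hd⟩)
    rw [Finset.mem_filter] at this
    exact this.2 he1

lemma eq_of_card_zero [Fintype E] {φ χ : E → Four}
    (h : (Finset.univ.filter (fun e => χ e ≠ φ e)).card = 0) : χ = φ := by
  funext e
  by_contra hne
  have : e ∈ Finset.univ.filter (fun e => χ e ≠ φ e) :=
    Finset.mem_filter.2 ⟨Finset.mem_univ e, hne⟩
  rw [Finset.card_eq_zero.1 h] at this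
  exact absurd this (Finset.notMem_empty e)

include A B in
lemma greedy_cycle [Fintype E] {φ φ' : E → Four} :
    ∀ (n : ℕ) (χ : E → Four), (Finset.univ.filter (fun e => χ e ≠ φ e)).card ≤ n →
    Relation.ReflTransGen (CycleStep src tgt) φ χ →
    (∀ e, χ e ≠ φ e → φ' e ≠ φ e) →
    Relation.ReflTransGen (RCycleStep src tgt φ φ') χ φ := by
  intro n
  induction n with
  | zero =>
    intro χ hcard _ _
    rw [eq_of_card_zero (Nat.le_zero.1 hcard)]
  | succ n ih =>
    intro χ hcard hist hsub
    by_cases hempty : χ = φ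
    · rw [hempty]
    · have hne : ∃ e, χ e ≠ φ e := by
        by_contra hno
        push_neg at hno
        exact hempty (funext hno)
      obtain ⟨e1, hd⟩ := hne
      have histCC : Relation.ReflTransGen (CCStep src tgt A B) φ χ :=
        Relation.ReflTransGen.mono (p := CCStep src tgt A B) (fun _ _ h => Or.inl h) _ _ hist
      have hcy : cycE src tgt A B χ e1 := cycle_hist_cyclic hist e1 hd
      obtain ⟨χ₂, hR, hC, hsub2, he1⟩ := good_cycle_step histCC hsub hd hcy
      have hcard2 := card_step (φ := φ) hsub2 hd he1
      refine Relation.ReflTransGen.head hR (ih χ₂ (by omega) (hist.tail hC) ?_)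
      exact fun e h => hsub e (hsub2 e h)

lemma greedy_cocycle [Fintype E] {φ φ' : E → Four} :
    ∀ (n : ℕ) (χ : E → Four), (Finset.univ.filter (fun e => χ e ≠ φ e)).card ≤ n →
    Relation.ReflTransGen (CocycleStep src tgt A B) φ χ →
    (∀ e, χ e ≠ φ e → φ' e ≠ φ e) →
    Relation.ReflTransGen (RCocycleStep src tgt A B φ φ') χ φ := by
  intro n
  induction n with
  | zero =>
    intro χ hcard _ _
    rw [eq_of_card_zero (Nat.le_zero.1 hcard)]
  | succ n ih =>
    intro χ hcard hist hsub
    by_cases hempty : χ = φ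
    · rw [hempty]
    · have hne : ∃ e, χ e ≠ φ e := by
        by_contra hno
        push_neg at hno
        exact hempty (funext hno)
      obtain ⟨e1, hd⟩ := hne
      have histCC : Relation.ReflTransGen (CCStep src tgt A B) φ χ :=
        Relation.ReflTransGen.mono (p := CCStep src tgt A B) (fun _ _ h => Or.inr h) _ _ hist
      have hcy : ¬ cycE src tgt A B χ e1 := cocycle_hist_acyclic hist e1 hd
      obtain ⟨χ₂, hR, hC, hsub2, he1⟩ := good_cocycle_step histCC hsub hd hcy
      have hcard2 := card_step (φ := φ) hsub2 hd he1
      refine Relation.ReflTransGen.head hR (ih χ₂ (by omega) (hist.tail hC) ?_)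
      exact fun e h => hsub e (hsub2 e h)

lemma greedy_cc [Fintype E] {φ φ' : E → Four} :
    ∀ (n : ℕ) (χ : E → Four), (Finset.univ.filter (fun e => χ e ≠ φ e)).card ≤ n →
    Relation.ReflTransGen (CCStep src tgt A B) φ χ →
    (∀ e, χ e ≠ φ e → φ' e ≠ φ e) →
    Relation.ReflTransGen
      (fun ψ ψ' => RCycleStep src tgt φ φ' ψ ψ' ∨ RCocycleStep src tgt A B φ φ' ψ ψ') χ φ := by
  intro n
  induction n with
  | zero =>
    intro χ hcard _ _
    rw [eq_of_card_zero (Nat.le_zero.1 hcard)]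
  | succ n ih =>
    intro χ hcard hist hsub
    by_cases hempty : χ = φ
    · rw [hempty]
    · have hne : ∃ e, χ e ≠ φ e := by
        by_contra hno
        push_neg at hno
        exact hempty (funext hno)
      obtain ⟨e1, hd⟩ := hne
      by_cases hcy : cycE src tgt A B χ e1
      · obtain ⟨χ₂, hR, hC, hsub2, he1⟩ := good_cycle_step hist hsub hd hcy
        have hcard2 := card_step (φ := φ) hsub2 hd he1
        refine Relation.ReflTransGen.head (Or.inl hR)
          (ih χ₂ (by omega) (hist.tail (Or.inl hC)) ?_)
        exact fun e h => hsub e (hsub2 e h)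
      · obtain ⟨χ₂, hR, hC, hsub2, he1⟩ := good_cocycle_step hist hsub hd hcy
        have hcard2 := card_step (φ := φ) hsub2 hd he1
        refine Relation.ReflTransGen.head (Or.inr hR)
          (ih χ₂ (by omega) (hist.tail (Or.inr hC)) ?_)
        exact fun e h => hsub e (hsub2 e h)

end Stmt16Main
/-- If two fourientations `φ, φ'` of `G` are cycle (resp. cocycle,
cycle-cocycle) equivalent, then `φ` can be obtained from `φ'` by repeatedly reversing
directed cycles (resp. directed `(A,B)`-cocycles, directed cycles or `(A,B)`-cocycles),
none of which contains a 1-way edge having the same orientation in `φ` and `φ'`. -/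
theorem statement16 {V E : Type*} [Fintype V] [Fintype E] [DecidableEq E] (src tgt : E → V)
    (A B : Set (V × V)) (φ φ' : E → Four) :
    (Relation.ReflTransGen (CycleStep src tgt) φ φ' →
      Relation.ReflTransGen (RCycleStep src tgt φ φ') φ' φ) ∧
    (Relation.ReflTransGen (CocycleStep src tgt A B) φ φ' →
      Relation.ReflTransGen (RCocycleStep src tgt A B φ φ') φ' φ) ∧
    (Relation.ReflTransGen (CCStep src tgt A B) φ φ' →
      Relation.ReflTransGen
        (fun ψ ψ' => RCycleStep src tgt φ φ' ψ ψ' ∨ RCocycleStep src tgt A B φ φ' ψ ψ')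
        φ' φ) := by
  classical
  refine ⟨?_, ?_, ?_⟩
  · intro h
    exact greedy_cycle (A := A) (B := B)
      (Finset.univ.filter (fun e => φ' e ≠ φ e)).card φ' le_rfl h (fun _ h' => h')
  · intro h
    exact greedy_cocycle (Finset.univ.filter (fun e => φ' e ≠ φ e)).card φ' le_rfl h
      (fun _ h' => h')
  · intro h
    exact greedy_cc (Finset.univ.filter (fun e => φ' e ≠ φ e)).card φ' le_rfl h
      (fun _ h' => h')
end SubgraphsVsOrientations
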